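/- arXiv:1912.07779 — 4 statements merged into one kernel-verified Lean document; each statement's English description precedes it below -/
import Mathlib

section
/- For every integer θ ≥ 3, there exists a bijection σ from the edge set of the cycle C_θ to {1,…,θ} that is simultaneously optimal for both the MaxMinSum and the MinVar problems: for every bijection σ' from the edges of C_θ to {1,…,θ}, one has min_{v} p_v(σ) ≥ min_{v} p_v(σ') and Var(σ) ≤ Var(σ'). -/
open Finset

/-- The popularity of vertex `v` under an edge labeling `σ`: the sum of the labels of
the edges of `G` incident to `v`. -/
noncomputable def popularity {V : Type*} [Fintype V] (G : SimpleGraph V) (σ : Sym2 V → ℕ)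
    (v : V) : ℕ := by
  classical
  exact ∑ e ∈ G.edgeFinset.filter (fun e => v ∈ e), σ e

/-- An edge labeling of `G`: a bijection from the edge set of `G` onto `{1,…,θ}`,
where `θ` is the number of edges of `G`. -/
def IsEdgeLabeling {V : Type*} (G : SimpleGraph V) (σ : Sym2 V → ℕ) : Prop :=
  Set.BijOn σ G.edgeSet (Set.Icc 1 (Nat.card G.edgeSet))


lemma tv1 {N : ℕ} [NeZero N] (hN : 2 ≤ N) (x : Fin N → ℤ) (p q : Fin N) :
    2 * (x p - x q) ≤ ∑ j : Fin N, |x (j + 1) - x j| := by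
  have hN0 : 0 < N := by omega
  set F : ℕ → ℤ := fun k => x ⟨k % N, Nat.mod_lt _ hN0⟩ with hFdef
  have hF : ∀ j : Fin N, F j.val = x j := by
    intro j; simp only [hFdef]; congr 1; exact Fin.ext (by simp [Nat.mod_eq_of_lt j.isLt])
  have hone : 1 % N = 1 := Nat.mod_eq_of_lt (by omega)
  have hF1 : ∀ j : Fin N, F (j.val + 1) = x (j + 1) := by
    intro j; simp only [hFdef]; congr 1
    refine Fin.ext ?_
    simp [Fin.add_def, Fin.val_one', hone, Nat.mod_eq_of_lt j.isLt]
  have hsum : ∑ j : Fin N, |x (j + 1) - x j| = ∑ k ∈ range N, |F (k + 1) - F k| := by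
    rw [← Fin.sum_univ_eq_sum_range (fun k => |F (k + 1) - F k|) N]
    exact Finset.sum_congr rfl fun j _ => by rw [hF j, hF1 j]
  have htel : ∀ A B : ℕ, A ≤ B → ∑ k ∈ Finset.Ico A B, (F (k+1) - F k) = F B - F A := by
    intro A B h
    have h1 : ∀ n, ∑ k ∈ range n, (F (k+1) - F k) = F n - F 0 := fun n => Finset.sum_range_sub F n
    rw [Finset.sum_Ico_eq_sub _ h, h1, h1]; ring
  set A := min p.val q.val
  set B := max p.val q.val
  have hAB : A ≤ B := min_le_max
  have hBN : B ≤ N := le_of_lt (by simp [B, p.isLt, q.isLt])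
  have hsplit : ∑ k ∈ range N, |F (k + 1) - F k| =
      (∑ k ∈ Finset.Ico 0 A, |F (k+1) - F k| + ∑ k ∈ Finset.Ico A B, |F (k+1) - F k|)
        + ∑ k ∈ Finset.Ico B N, |F (k+1) - F k| := by
    rw [Finset.range_eq_Ico, ← Finset.sum_Ico_consecutive _ (Nat.zero_le B) hBN,
        ← Finset.sum_Ico_consecutive _ (Nat.zero_le A) hAB]
  have hmid : |F B - F A| ≤ ∑ k ∈ Finset.Ico A B, |F (k+1) - F k| := by
    rw [← htel A B hAB]; exact Finset.abs_sum_le_sum_abs _ _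
  have hFN : F N = F 0 := by simp [hFdef, Nat.mod_self]
  have hout : |F B - F A| ≤ ∑ k ∈ Finset.Ico 0 A, |F (k+1) - F k| + ∑ k ∈ Finset.Ico B N, |F (k+1) - F k| := by
    have h1 := htel 0 A (Nat.zero_le A)
    have h2 := htel B N hBN
    have key : F A - F 0 + (F N - F B) = F A - F B := by rw [hFN]; ring
    calc |F B - F A| = |F A - F 0 + (F N - F B)| := by rw [key, abs_sub_comm]
    _ ≤ |F A - F 0| + |F N - F B| := abs_add_le _ _
    _ ≤ _ := by
        rw [← h1, ← h2]
        gcongr <;> exact Finset.abs_sum_le_sum_abs _ _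
  have hpq : |F B - F A| = |x p - x q| := by
    rcases le_total p.val q.val with h | h
    · have h1 : A = p.val := min_eq_left h
      have h2 : B = q.val := max_eq_right h
      rw [h1, h2, hF, hF, abs_sub_comm]
    · have h1 : A = q.val := min_eq_right h
      have h2 : B = p.val := max_eq_left h
      rw [h1, h2, hF, hF]
  have hmain : 2 * |x p - x q| ≤ ∑ k ∈ range N, |F (k + 1) - F k| := by
    rw [hsplit, two_mul, ← hpq]
    linarith [hout, hmid]
  calc 2 * (x p - x q) ≤ 2 * |x p - x q| := by have := le_abs_self (x p - x q); omega
  _ ≤ _ := by rw [hsum]; exact hmain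

lemma popularity_eq_sum {V : Type*} [Fintype V] (G : SimpleGraph V) (σ : Sym2 V → ℕ) (v : V)
    [Fintype G.edgeSet] [DecidablePred (fun e : Sym2 V => v ∈ e)] :
    popularity G σ v = ∑ e ∈ G.edgeFinset.filter (fun e => v ∈ e), σ e := by
  unfold popularity
  congr!

def Ecyc (n : ℕ) : Fin (n+3) → Sym2 (Fin (n+3)) := fun i => s(i, i+1)

lemma val_add_one {n : ℕ} (i : Fin (n+3)) :
    (i + 1).val = if i.val = n + 2 then 0 else i.val + 1 := by
  rw [Fin.add_def, Fin.val_one]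
  by_cases h : i.val = n + 2
  · simp [h]
  · have hlt : i.val + 1 < n + 3 := by have := i.isLt; omega
    simp [h, Nat.mod_eq_of_lt hlt]

lemma val_sub_one {n : ℕ} (i : Fin (n+3)) :
    (i - 1).val = if i.val = 0 then n + 2 else i.val - 1 := by
  have key : (n + 3 - 1 + i.val) % (n+3) = if i.val = 0 then n + 2 else i.val - 1 := by
    by_cases h : i.val = 0
    · rw [h, Nat.add_zero, Nat.mod_eq_of_lt (by omega)]
      simp
    · rw [show n+3-1+i.val = (i.val - 1) + (n+3) from by omega, Nat.add_mod_right,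
        Nat.mod_eq_of_lt (by have := i.isLt; omega)]
      simp [h]
  simp only [Fin.sub_def, Fin.val_one]
  exact key

lemma Ecyc_inj (n : ℕ) : Function.Injective (Ecyc n) := by
  intro i j h
  simp only [Ecyc, Sym2.eq_iff] at h
  rcases h with ⟨h1, -⟩ | ⟨h1, h2⟩
  · exact h1
  · exfalso
    have h3 : i = i + 1 + 1 := by conv_lhs => rw [h1, ← h2]
    have hv := congrArg Fin.val h3
    have hv1 := val_add_one i
    have hv2 := val_add_one (i+1)
    have hx := i.isLt
    have hy := (i+1).isLt
    split_ifs at hv1 hv2 <;> omega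

lemma cyc_adj (n : ℕ) (i : Fin (n+3)) : (SimpleGraph.cycleGraph (n+3)).Adj i (i+1) := by
  have : (n+3) = (n+1) + 2 := by omega
  rw [SimpleGraph.cycleGraph_adj (n := n+1)]
  right
  exact add_sub_cancel_left i 1

lemma cyc_edgeSet (n : ℕ) : (SimpleGraph.cycleGraph (n+3)).edgeSet = Set.range (Ecyc n) := by
  ext e
  induction e using Sym2.ind with
  | _ u v =>
    rw [SimpleGraph.mem_edgeSet]
    constructor
    · intro h
      rw [SimpleGraph.cycleGraph_adj (n := n+1)] at h
      rcases h with h | h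
      · have hu : u = v + 1 := (eq_add_of_sub_eq h).trans (add_comm 1 v)
        subst hu
        exact ⟨v, Sym2.eq_swap⟩
      · have hv : v = u + 1 := (eq_add_of_sub_eq h).trans (add_comm 1 u)
        subst hv
        exact ⟨u, rfl⟩
    · rintro ⟨i, hi⟩
      simp only [Ecyc, Sym2.eq_iff] at hi
      rcases hi with ⟨h1, h2⟩ | ⟨h1, h2⟩
      · subst h1; subst h2; exact cyc_adj n i
      · subst h1; subst h2; exact (cyc_adj n i).symm

lemma cyc_card_edgeSet (n : ℕ) : Nat.card (SimpleGraph.cycleGraph (n+3)).edgeSet = n + 3 := by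
  rw [cyc_edgeSet, Nat.card_range_of_injective (Ecyc_inj n)]
  simp

lemma cyc_edgeFinset (n : ℕ) [Fintype (SimpleGraph.cycleGraph (n+3)).edgeSet] :
    (SimpleGraph.cycleGraph (n+3)).edgeFinset = Finset.univ.image (Ecyc n) := by
  have := cyc_edgeSet n
  rw [SimpleGraph.edgeFinset, Set.toFinset_congr this, Set.toFinset_range]

lemma sub_one_ne_self (n : ℕ) (v : Fin (n+3)) : v - 1 ≠ v := by
  intro h
  have hv := congrArg Fin.val h
  rw [val_sub_one] at hv
  have := v.isLt
  split_ifs at hv <;> omega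

lemma sub_one_add_one (n : ℕ) (v : Fin (n+3)) : v - 1 + 1 = v := by
  exact sub_add_cancel v 1

lemma cyc_filter_mem (n : ℕ) (v : Fin (n+3)) [Fintype (SimpleGraph.cycleGraph (n+3)).edgeSet]
    [DecidablePred (fun e : Sym2 (Fin (n+3)) => v ∈ e)] :
    (SimpleGraph.cycleGraph (n+3)).edgeFinset.filter (fun e => v ∈ e)
      = {Ecyc n (v-1), Ecyc n v} := by
  ext e
  rw [Finset.mem_filter, cyc_edgeFinset, Finset.mem_insert, Finset.mem_singleton]
  constructor
  · rintro ⟨he, hv⟩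
    obtain ⟨i, -, rfl⟩ := Finset.mem_image.mp he
    rw [Ecyc, Sym2.mem_iff] at hv
    rcases hv with rfl | rfl
    · right; rfl
    · left; rw [Ecyc, Ecyc, add_sub_cancel_right]
  · rintro (rfl | rfl)
    · refine ⟨Finset.mem_image.mpr ⟨v-1, Finset.mem_univ _, rfl⟩, ?_⟩
      rw [Ecyc, Sym2.mem_iff, sub_one_add_one]
      right; rfl
    · refine ⟨Finset.mem_image.mpr ⟨v, Finset.mem_univ _, rfl⟩, ?_⟩
      rw [Ecyc, Sym2.mem_iff]
      left; rfl

lemma pop_formula (n : ℕ) (σ : Sym2 (Fin (n+3)) → ℕ) (v : Fin (n+3)) :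
    popularity (SimpleGraph.cycleGraph (n+3)) σ v = σ (Ecyc n (v-1)) + σ (Ecyc n v) := by
  classical
  rw [popularity_eq_sum, cyc_filter_mem]
  rw [Finset.sum_pair (fun h => sub_one_ne_self n v (Ecyc_inj n h))]


lemma spread {m : ℕ} (hm : 1 ≤ m) (f : Fin m → ℤ) (hf : Function.Injective f) :
    ∃ p q, (m : ℤ) - 1 ≤ f p - f q := by
  have hne : (univ.image f).Nonempty := by
    haveI : Nonempty (Fin m) := Fin.pos_iff_nonempty.mp (by omega)
    exact Finset.image_nonempty.mpr Finset.univ_nonempty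
  obtain ⟨p, -, hp⟩ := Finset.mem_image.mp (Finset.max'_mem _ hne)
  obtain ⟨q, -, hq⟩ := Finset.mem_image.mp (Finset.min'_mem _ hne)
  refine ⟨p, q, ?_⟩
  have hsub : univ.image f ⊆ Finset.Icc ((univ.image f).min' hne) ((univ.image f).max' hne) :=
    fun x hx => Finset.mem_Icc.mpr ⟨Finset.min'_le _ _ hx, Finset.le_max' _ _ hx⟩
  have hcard : (univ.image f).card = m := by rw [Finset.card_image_of_injective _ hf]; simp
  have h2 := Finset.card_le_card hsub
  rw [hcard, Int.card_Icc] at h2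
  rw [hp, hq]
  omega

lemma dbl_inj (n : ℕ) (hodd : (n+3) % 2 = 1) :
    Function.Injective (fun j : Fin (n+3) => j + j) := by
  intro j k h
  have hv : (j.val + j.val) % (n+3) = (k.val + k.val) % (n+3) := by
    simpa [Fin.add_def] using congrArg Fin.val h
  have hd : ((n+3 : ℕ) : ℤ) ∣ ((k.val + k.val : ℕ) : ℤ) - ((j.val + j.val : ℕ) : ℤ) :=
    Nat.ModEq.dvd hv
  obtain ⟨c, hc⟩ := hd
  have hj := j.isLt
  have hk := k.isLt
  have hc1 : ((n:ℤ)+3) * c < ((n:ℤ)+3) * 2 := by push_cast at hc ⊢; nlinarith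
  have hc2 : ((n:ℤ)+3) * (-2) < ((n:ℤ)+3) * c := by push_cast at hc ⊢; nlinarith
  have hcu : c < 2 := lt_of_mul_lt_mul_left hc1 (by positivity)
  have hcl : -2 < c := lt_of_mul_lt_mul_left hc2 (by positivity)
  interval_cases c <;> (apply Fin.ext; push_cast at hc; omega)


lemma lb_key_odd (n : ℕ) (hodd : (n+3) % 2 = 1) (a : Fin (n+3) → ℕ)
    (hinj : Function.Injective a) (P Q : Fin (n+3)) (hP : a P = n+3) (hQ : a Q = 1) :
    2 * (((n:ℤ)+3) - 1) ≤ ∑ i : Fin (n+3), |(a (i+1+1) : ℤ) - a i| := by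
  set f : Fin (n+3) → Fin (n+3) := fun j => j + j with hf
  have hbij : Function.Bijective f := Finite.injective_iff_bijective.mp (dbl_inj n hodd)
  set e := Equiv.ofBijective f hbij with he
  set x : Fin (n+3) → ℤ := fun j => (a (f j) : ℤ) with hx
  have key := tv1 (by omega) x (e.symm P) (e.symm Q)
  have hxP : x (e.symm P) = (n:ℤ)+3 := by
    show ((a (f (e.symm P)) : ℤ)) = (n:ℤ)+3
    rw [show f (e.symm P) = P from e.apply_symm_apply P, hP]
    push_cast; ring
  have hxQ : x (e.symm Q) = 1 := by
    show ((a (f (e.symm Q)) : ℤ)) = 1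
    rw [show f (e.symm Q) = Q from e.apply_symm_apply Q, hQ]
    norm_num
  have hsum : ∑ j : Fin (n+3), |x (j + 1) - x j| = ∑ i : Fin (n+3), |(a (i+1+1) : ℤ) - a i| := by
    rw [← Equiv.sum_comp e (fun i => |(a (i+1+1) : ℤ) - a i|)]
    refine Finset.sum_congr rfl fun j _ => ?_
    have h1 : f (j + 1) = f j + 1 + 1 := by
      show (j+1)+(j+1) = j + j + 1 + 1
      rw [add_add_add_comm, ← add_assoc]
    show |((a (f (j+1)) : ℤ)) - ((a (f j) : ℤ))| = |((a (e j + 1 + 1) : ℤ)) - ((a (e j) : ℤ))|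
    rw [h1]
    rfl
  rw [hxP, hxQ] at key
  rw [← hsum]
  linarith

lemma val_add_one' {n : ℕ} (i : Fin (n+3)) :
    (i + 1).val = if i.val = n + 2 then 0 else i.val + 1 := by
  rw [Fin.add_def, Fin.val_one]
  by_cases h : i.val = n + 2
  · simp [h]
  · have hlt : i.val + 1 < n + 3 := by have := i.isLt; omega
    simp [h, Nat.mod_eq_of_lt hlt]

lemma lb_key_even (n : ℕ) (heven : (n+3) % 2 = 0) (a : Fin (n+3) → ℕ)
    (hinj : Function.Injective a) :
    2 * (((n:ℤ)+3) - 2) ≤ ∑ i : Fin (n+3), |(a (i+1+1) : ℤ) - a i| := by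
  obtain ⟨m, hm⟩ : ∃ m, n + 3 = 2*m := ⟨(n+3)/2, by omega⟩
  have hm2 : 2 ≤ m := by omega
  haveI : NeZero m := ⟨by omega⟩
  set g : Fin (n+3) → ℤ := fun i => |(a (i+1+1) : ℤ) - a i| with hg
  set emb1 : Fin m → Fin (n+3) := fun j => ⟨2*j.val, by have := j.isLt; omega⟩ with hemb1
  set emb2 : Fin m → Fin (n+3) := fun j => ⟨2*j.val+1, by have := j.isLt; omega⟩ with hemb2
  have hLv : ∀ j : Fin m, ((j + 1 : Fin m)).val = (j.val + 1) % m := by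
    intro j
    rw [Fin.add_def, Fin.val_one', Nat.mod_eq_of_lt (show 1 < m by omega)]
  have hstep1 : ∀ j : Fin m, emb1 (j+1) = emb1 j + 1 + 1 := by
    intro j
    apply Fin.ext
    have hj := j.isLt
    rw [val_add_one', val_add_one']
    show 2 * ((j + 1 : Fin m)).val = _
    rw [hLv j]
    by_cases hj1 : j.val + 1 = m
    · rw [hj1, Nat.mod_self]
      simp only [hemb1]
      split_ifs <;> first | contradiction | omega
    · rw [Nat.mod_eq_of_lt (by omega)]
      simp only [hemb1]
      split_ifs <;> first | contradiction | omega
  have hstep2 : ∀ j : Fin m, emb2 (j+1) = emb2 j + 1 + 1 := by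
    intro j
    apply Fin.ext
    have hj := j.isLt
    rw [val_add_one', val_add_one']
    show 2 * ((j + 1 : Fin m)).val + 1 = _
    rw [hLv j]
    by_cases hj1 : j.val + 1 = m
    · rw [hj1, Nat.mod_self]
      simp only [hemb2]
      split_ifs <;> first | contradiction | omega
    · rw [Nat.mod_eq_of_lt (by omega)]
      simp only [hemb2]
      split_ifs <;> first | contradiction | omega
  have hinje1 : Function.Injective emb1 := by
    intro j k h
    have := congrArg Fin.val h
    simp only [hemb1] at this
    exact Fin.ext (by omega)
  have hinje2 : Function.Injective emb2 := by
    intro j k h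
    have := congrArg Fin.val h
    simp only [hemb2] at this
    exact Fin.ext (by omega)
  have horbit : ∀ (emb : Fin m → Fin (n+3)), Function.Injective emb →
      (∀ j : Fin m, emb (j+1) = emb j + 1 + 1) →
      2 * ((m:ℤ) - 1) ≤ ∑ j : Fin m, g (emb j) := by
    intro emb hinje hstep
    set x : Fin m → ℤ := fun j => (a (emb j) : ℤ) with hxd
    have hxinj : Function.Injective x := by
      intro j k h
      exact hinje (hinj (Nat.cast_injective h))
    obtain ⟨p, q, hpq⟩ := spread (by omega) x hxinj
    have key := tv1 hm2 x p q
    have hpt : ∀ j : Fin m, |x (j+1) - x j| = g (emb j) := by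
      intro j
      show |((a (emb (j+1)) : ℤ)) - _| = _
      rw [hstep j]
    rw [Finset.sum_congr rfl (fun j _ => hpt j)] at key
    linarith
  have h1 := horbit emb1 hinje1 hstep1
  have h2 := horbit emb2 hinje2 hstep2
  have hsplit : ∑ i : Fin (n+3), g i = ∑ j : Fin m, g (emb1 j) + ∑ j : Fin m, g (emb2 j) := by
    have hdisj : Disjoint (univ.image emb1) (univ.image emb2) := by
      rw [Finset.disjoint_left]
      intro i hi1 hi2
      obtain ⟨j, -, hj⟩ := Finset.mem_image.mp hi1
      obtain ⟨k, -, hk⟩ := Finset.mem_image.mp hi2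
      have hv1 := congrArg Fin.val hj
      have hv2 := congrArg Fin.val hk
      simp only [hemb1] at hv1
      simp only [hemb2] at hv2
      omega
    have huniv : univ.image emb1 ∪ univ.image emb2 = (univ : Finset (Fin (n+3))) := by
      apply Finset.eq_univ_of_card
      rw [Finset.card_union_of_disjoint hdisj, Finset.card_image_of_injective _ hinje1,
        Finset.card_image_of_injective _ hinje2]
      simp only [Finset.card_univ, Fintype.card_fin]
      omega
    rw [← huniv, Finset.sum_union hdisj, Finset.sum_image (fun j _ k _ h => hinje1 h),
      Finset.sum_image (fun j _ k _ h => hinje2 h)]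
  rw [hsplit]
  have : ((n:ℤ)+3) = 2*m := by exact_mod_cast congrArg (Nat.cast : ℕ → ℤ) hm
  linarith

lemma img_eq (n : ℕ) (a : Fin (n+3) → ℕ) (hinj : Function.Injective a)
    (hmem : ∀ i, a i ∈ Finset.Icc 1 (n+3)) :
    Finset.univ.image a = Finset.Icc 1 (n+3) := by
  apply Finset.eq_of_subset_of_card_le
  · intro x hx
    obtain ⟨i, -, rfl⟩ := Finset.mem_image.mp hx
    exact hmem i
  · rw [Nat.card_Icc, Finset.card_image_of_injective _ hinj]
    simp

lemma lb_var (n : ℕ) (a : Fin (n+3) → ℕ) (hinj : Function.Injective a)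
    (hmem : ∀ i, a i ∈ Finset.Icc 1 (n+3)) :
    ((n:ℤ)+3) - 2 + (((n+3) % 2 : ℕ) : ℤ) ≤
      ∑ v : Fin (n+3), ((a (v-1) : ℤ) + a v - ((n:ℤ)+4))^2 := by
  set d : Fin (n+3) → ℤ := fun v => (a (v-1) : ℤ) + a v - ((n:ℤ)+4) with hd
  have habs : ∀ v, |d v| ≤ (d v)^2 := by
    intro v
    rcases eq_or_ne (d v) 0 with h | h
    · simp [h]
    · have h1 : 1 ≤ |d v| := Int.one_le_abs h
      nlinarith [sq_abs (d v), abs_nonneg (d v)]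
  have hdd : ∀ v : Fin (n+3), d (v+1) - d v = (a (v+1) : ℤ) - a (v-1) := by
    intro v
    simp only [hd]
    rw [add_sub_cancel_right v 1]
    ring
  have hre1 : ∑ v : Fin (n+3), |d (v+1)| = ∑ v, |d v| := by
    rw [← Equiv.sum_comp (Equiv.addRight (1 : Fin (n+3))) (fun v => |d v|)]
    rfl
  have hre2 : ∑ i : Fin (n+3), |(a (i+1+1) : ℤ) - a i| = ∑ v : Fin (n+3), |(a (v+1) : ℤ) - a (v-1)| := by
    rw [← Equiv.sum_comp (Equiv.addRight (1 : Fin (n+3))) (fun v => |(a (v+1) : ℤ) - a (v-1)|)]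
    refine Finset.sum_congr rfl fun i _ => ?_
    simp only [Equiv.coe_addRight]
    rw [add_sub_cancel_right]
  have hkey : 2*((((n:ℤ)+3) - 2) + (((n+3) % 2 : ℕ) : ℤ)) ≤ ∑ i : Fin (n+3), |(a (i+1+1):ℤ) - a i| := by
    rcases Nat.mod_two_eq_zero_or_one (n+3) with h | h
    · rw [h]
      have := lb_key_even n h a hinj
      push_cast
      linarith
    · rw [h]
      have hPm : (n+3) ∈ Finset.univ.image a := by
        rw [img_eq n a hinj hmem]; simp
      have hQm : 1 ∈ Finset.univ.image a := by
        rw [img_eq n a hinj hmem]; simp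
      obtain ⟨P, -, hP⟩ := Finset.mem_image.mp hPm
      obtain ⟨Q, -, hQ⟩ := Finset.mem_image.mp hQm
      have := lb_key_odd n h a hinj P Q hP hQ
      push_cast
      linarith
  have hchain : ∑ i : Fin (n+3), |(a (i+1+1):ℤ) - a i| ≤ 2 * ∑ v, |d v| := by
    rw [hre2]
    calc ∑ v : Fin (n+3), |(a (v+1) : ℤ) - a (v-1)| = ∑ v : Fin (n+3), |d (v+1) - d v| := by
          refine Finset.sum_congr rfl fun v _ => ?_
          rw [hdd v]
    _ ≤ ∑ v : Fin (n+3), (|d (v+1)| + |d v|) := by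
          refine Finset.sum_le_sum fun v _ => ?_
          exact abs_sub _ _
    _ = 2 * ∑ v, |d v| := by rw [Finset.sum_add_distrib, hre1]; ring
  have hfin : ∑ v, |d v| ≤ ∑ v, (d v)^2 := Finset.sum_le_sum fun v _ => habs v
  linarith

lemma sum_pop (n : ℕ) (a : Fin (n+3) → ℕ) (hinj : Function.Injective a)
    (hmem : ∀ i, a i ∈ Finset.Icc 1 (n+3)) :
    ∑ v : Fin (n+3), ((a (v-1) : ℤ) + a v) = ((n:ℤ)+3) * ((n:ℤ)+4) := by
  rw [Finset.sum_add_distrib]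
  have h1 : ∑ v : Fin (n+3), (a (v-1) : ℤ) = ∑ v, (a v : ℤ) := by
    rw [← Equiv.sum_comp (Equiv.subRight (1 : Fin (n+3))) (fun v => (a v : ℤ))]
    rfl
  have h2 : ∑ v, (a v : ℤ) = ∑ k ∈ Finset.Icc 1 (n+3), (k : ℤ) := by
    rw [← img_eq n a hinj hmem, Finset.sum_image (fun i _ j _ h => hinj h)]
  have h3 : (∑ k ∈ Finset.Icc 1 (n+3), k) * 2 = (n+4) * (n+3) := by
    have hins : Finset.range (n+4) = insert 0 (Finset.Icc 1 (n+3)) := by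
      ext k; simp; omega
    have := Finset.sum_range_id_mul_two (n+4)
    rw [hins, Finset.sum_insert (by simp)] at this
    simpa using this
  have h4 : ∑ k ∈ Finset.Icc 1 (n+3), (k : ℤ) = ((∑ k ∈ Finset.Icc 1 (n+3), k : ℕ) : ℤ) := by
    push_cast
    rfl
  rw [h1, h2, h4]
  have : ((∑ k ∈ Finset.Icc 1 (n+3), k : ℕ) : ℤ) * 2 = ((n:ℤ)+4) * ((n:ℤ)+3) := by
    exact_mod_cast congrArg (Nat.cast : ℕ → ℤ) h3
  linarith

lemma ub_min (n : ℕ) (a : Fin (n+3) → ℕ) (hinj : Function.Injective a)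
    (hmem : ∀ i, a i ∈ Finset.Icc 1 (n+3)) :
    ∃ v : Fin (n+3), a (v-1) + a v ≤ n + 3 := by
  by_contra hcon
  push_neg at hcon
  set d : Fin (n+3) → ℤ := fun v => (a (v-1) : ℤ) + a v - ((n:ℤ)+4) with hd
  have hnonneg : ∀ v ∈ Finset.univ, 0 ≤ d v := by
    intro v _
    have := hcon v
    simp only [hd]
    push_cast
    omega
  have hsumd : ∑ v, d v = 0 := by
    simp only [hd]
    rw [Finset.sum_sub_distrib, sum_pop n a hinj hmem]
    simp
  have hall : ∀ v ∈ Finset.univ, d v = 0 :=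
    (Finset.sum_eq_zero_iff_of_nonneg hnonneg).mp hsumd
  have hzero : ∑ v : Fin (n+3), ((a (v-1) : ℤ) + a v - ((n:ℤ)+4))^2 = 0 := by
    refine Finset.sum_eq_zero fun v _ => ?_
    rw [show (a (v-1) : ℤ) + a v - ((n:ℤ)+4) = d v from rfl, hall v (Finset.mem_univ v)]
    ring
  have := lb_var n a hinj hmem
  rw [hzero] at this
  have h2 : (0:ℤ) ≤ (((n+3) % 2 : ℕ) : ℤ) := by positivity
  linarith

def arrO (n : ℕ) : Fin (n+3) → ℕ :=
  fun i => if i.val % 2 = 0 then i.val + 1 else (n+3) - i.val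

def arrE (n : ℕ) : Fin (n+3) → ℕ :=
  fun i => if 2*i.val < n+3 then (if i.val % 2 = 0 then i.val + 1 else (n+3) - i.val)
    else (if i.val % 2 = 0 then (n+3) - i.val else i.val + 1)

lemma arrO_mem (n : ℕ) (i : Fin (n+3)) : arrO n i ∈ Finset.Icc 1 (n+3) := by
  have := i.isLt
  rw [Finset.mem_Icc, arrO]
  split_ifs <;> omega

lemma arrE_mem (n : ℕ) (i : Fin (n+3)) : arrE n i ∈ Finset.Icc 1 (n+3) := by
  have := i.isLt
  rw [Finset.mem_Icc, arrE]
  split_ifs <;> omega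

lemma arrO_inj (n : ℕ) (hodd : (n+3) % 2 = 1) : Function.Injective (arrO n) := by
  intro i j h
  have hi := i.isLt
  have hj := j.isLt
  simp only [arrO] at h
  split_ifs at h <;> (apply Fin.ext; omega)

lemma arrE_inj (n : ℕ) (heven : (n+3) % 2 = 0) : Function.Injective (arrE n) := by
  intro i j h
  have hi := i.isLt
  have hj := j.isLt
  simp only [arrE] at h
  split_ifs at h <;> (apply Fin.ext; omega)

lemma arrO_sum (n : ℕ) (hodd : (n+3) % 2 = 1) (v : Fin (n+3)) :
    (v.val = 0 ∧ arrO n (v-1) + arrO n v = n+4) ∨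
      (v.val ≠ 0 ∧ (arrO n (v-1) + arrO n v = n+3 ∨ arrO n (v-1) + arrO n v = n+5)) := by
  have hv := v.isLt
  simp only [arrO]
  rw [val_sub_one]
  split_ifs <;> omega

lemma arrE_sum (n : ℕ) (heven : (n+3) % 2 = 0) (v : Fin (n+3)) :
    ((v.val = 0 ∨ 2*v.val = n+3) ∧ arrE n (v-1) + arrE n v = n+4) ∨
      (¬(v.val = 0 ∨ 2*v.val = n+3) ∧
        (arrE n (v-1) + arrE n v = n+3 ∨ arrE n (v-1) + arrE n v = n+5)) := by
  have hv := v.isLt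
  simp only [arrE]
  rw [val_sub_one]
  split_ifs <;> omega

lemma arrO_var (n : ℕ) (hodd : (n+3) % 2 = 1) :
    ∑ v : Fin (n+3), ((arrO n (v-1) : ℤ) + arrO n v - ((n:ℤ)+4))^2
      = ((n:ℤ)+3) - 2 + (((n+3) % 2 : ℕ) : ℤ) := by
  have hterm : ∀ v : Fin (n+3), ((arrO n (v-1) : ℤ) + arrO n v - ((n:ℤ)+4))^2
      = 1 - (if v = 0 then (1:ℤ) else 0) := by
    intro v
    rcases arrO_sum n hodd v with ⟨h0, hs⟩ | ⟨h0, hs⟩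
    · have hv0 : v = 0 := Fin.ext (by simpa using h0)
      have hz : (arrO n (v-1) : ℤ) + arrO n v = (n:ℤ)+4 := by exact_mod_cast hs
      rw [if_pos hv0, hz]; ring
    · rw [if_neg (fun h => h0 (by rw [h]; rfl))]
      rcases hs with hs | hs <;>
        (first
          | (have hz : (arrO n (v-1) : ℤ) + arrO n v = (n:ℤ)+3 := by exact_mod_cast hs
             rw [hz]; ring)
          | (have hz : (arrO n (v-1) : ℤ) + arrO n v = (n:ℤ)+5 := by exact_mod_cast hs
             rw [hz]; ring))
  rw [Finset.sum_congr rfl (fun v _ => hterm v), Finset.sum_sub_distrib,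
    Finset.sum_ite_eq' Finset.univ (0 : Fin (n+3)) (fun _ => (1:ℤ))]
  simp [Finset.card_univ, hodd]
  push_cast
  ring

lemma arrE_var (n : ℕ) (heven : (n+3) % 2 = 0) :
    ∑ v : Fin (n+3), ((arrE n (v-1) : ℤ) + arrE n v - ((n:ℤ)+4))^2
      = ((n:ℤ)+3) - 2 + (((n+3) % 2 : ℕ) : ℤ) := by
  set M : Fin (n+3) := ⟨(n+3)/2, by omega⟩ with hM
  have hM2 : 2 * M.val = n + 3 := by simp only [hM]; omega
  have hM0 : M ≠ 0 := by
    intro h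
    have := congrArg Fin.val h
    simp only [hM, Fin.val_zero] at this
    omega
  have hterm : ∀ v : Fin (n+3), ((arrE n (v-1) : ℤ) + arrE n v - ((n:ℤ)+4))^2
      = 1 - (if v = 0 then (1:ℤ) else 0) - (if v = M then (1:ℤ) else 0) := by
    intro v
    rcases arrE_sum n heven v with ⟨h0, hs⟩ | ⟨h0, hs⟩
    · have hz : (arrE n (v-1) : ℤ) + arrE n v = (n:ℤ)+4 := by exact_mod_cast hs
      rcases h0 with h0 | h0
      · have hv0 : v = 0 := Fin.ext (by simpa using h0)
        rw [if_pos hv0, if_neg (by rw [hv0]; exact fun h => hM0 h.symm), hz]; ring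
      · have hvM : v = M := Fin.ext (by simp only [hM]; omega)
        rw [if_neg (by rw [hvM]; exact fun h => hM0 (h ▸ rfl)), if_pos hvM, hz]; ring
    · push_neg at h0
      rw [if_neg (fun h => h0.1 (by rw [h]; rfl)),
        if_neg (fun h => h0.2 (by rw [h]; exact hM2))]
      rcases hs with hs | hs <;>
        (first
          | (have hz : (arrE n (v-1) : ℤ) + arrE n v = (n:ℤ)+3 := by exact_mod_cast hs
             rw [hz]; ring)
          | (have hz : (arrE n (v-1) : ℤ) + arrE n v = (n:ℤ)+5 := by exact_mod_cast hs
             rw [hz]; ring))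
  rw [Finset.sum_congr rfl (fun v _ => hterm v), Finset.sum_sub_distrib, Finset.sum_sub_distrib,
    Finset.sum_ite_eq' Finset.univ (0 : Fin (n+3)) (fun _ => (1:ℤ)),
    Finset.sum_ite_eq' Finset.univ M (fun _ => (1:ℤ))]
  simp [Finset.card_univ, heven]
  push_cast
  ring

lemma add_one_add_one_ne {n : ℕ} (u : Fin (n+3)) : u + 1 + 1 ≠ u := by
  intro h
  have hv := congrArg Fin.val h
  simp only [val_add_one'] at hv
  have h1 := u.isLt
  split_ifs at hv <;> omega

def sigmaOf (n : ℕ) (a : Fin (n+3) → ℕ) : Sym2 (Fin (n+3)) → ℕ :=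
  Sym2.lift ⟨fun u v => if v = u + 1 then a u else if u = v + 1 then a v else 0, by
    intro u v
    simp only
    by_cases h1 : v = u + 1 <;> by_cases h2 : u = v + 1
    · subst h2
      exact absurd h1.symm (add_one_add_one_ne v)
    · rw [if_pos h1, if_neg h2, if_pos h1]
    · rw [if_neg h1, if_pos h2, if_pos h2]
    · rw [if_neg h1, if_neg h2, if_neg h2, if_neg h1]⟩

lemma sigmaOf_E (n : ℕ) (a : Fin (n+3) → ℕ) (i : Fin (n+3)) :
    sigmaOf n a (Ecyc n i) = a i := by
  simp [sigmaOf, Ecyc]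

theorem statement13' (n : ℕ) :
    ∃ σ : Sym2 (Fin (n+3)) → ℕ, IsEdgeLabeling (SimpleGraph.cycleGraph (n+3)) σ ∧
      ∀ σ' : Sym2 (Fin (n+3)) → ℕ, IsEdgeLabeling (SimpleGraph.cycleGraph (n+3)) σ' →
        sInf (Set.range (popularity (SimpleGraph.cycleGraph (n+3)) σ')) ≤
            sInf (Set.range (popularity (SimpleGraph.cycleGraph (n+3)) σ)) ∧
          (∑ v : Fin (n+3), ((popularity (SimpleGraph.cycleGraph (n+3)) σ v : ℚ) - (((n+3 : ℕ) : ℚ) + 1)) ^ 2) ≤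
            ∑ v : Fin (n+3), ((popularity (SimpleGraph.cycleGraph (n+3)) σ' v : ℚ) - (((n+3 : ℕ) : ℚ) + 1)) ^ 2 := by
  classical
  obtain ⟨a, hinj, hmem, hge, hvar⟩ :
      ∃ a : Fin (n+3) → ℕ, Function.Injective a ∧ (∀ i, a i ∈ Finset.Icc 1 (n+3)) ∧
        (∀ v, n+3 ≤ a (v-1) + a v) ∧
        (∑ v : Fin (n+3), ((a (v-1) : ℤ) + a v - ((n:ℤ)+4))^2
          = ((n:ℤ)+3) - 2 + (((n+3) % 2 : ℕ) : ℤ)) := by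
    rcases Nat.mod_two_eq_zero_or_one (n+3) with hpar | hpar
    · refine ⟨arrE n, arrE_inj n hpar, arrE_mem n, ?_, arrE_var n hpar⟩
      intro v
      rcases arrE_sum n hpar v with ⟨-, h⟩ | ⟨-, h⟩ <;> omega
    · refine ⟨arrO n, arrO_inj n hpar, arrO_mem n, ?_, arrO_var n hpar⟩
      intro v
      rcases arrO_sum n hpar v with ⟨-, h⟩ | ⟨-, h⟩ <;> omega
  set G := SimpleGraph.cycleGraph (n+3) with hG
  set σ := sigmaOf n a with hσ
  have hσE : ∀ i, σ (Ecyc n i) = a i := sigmaOf_E n a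
  have hcard : Nat.card G.edgeSet = n+3 := cyc_card_edgeSet n
  have hlab : IsEdgeLabeling G σ := by
    show Set.BijOn σ G.edgeSet (Set.Icc 1 (Nat.card G.edgeSet))
    rw [hcard, hG, cyc_edgeSet]
    refine ⟨?_, ?_, ?_⟩
    · rintro e ⟨i, rfl⟩
      rw [hσE]
      exact Set.mem_Icc.mpr (Finset.mem_Icc.mp (hmem i))
    · rintro e ⟨i, rfl⟩ f ⟨j, rfl⟩ h
      rw [hσE, hσE] at h
      rw [hinj h]
    · intro k hk
      have hk' : k ∈ Finset.Icc 1 (n+3) := Finset.mem_Icc.mpr (Set.mem_Icc.mp hk)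
      rw [← img_eq n a hinj hmem] at hk'
      obtain ⟨i, -, rfl⟩ := Finset.mem_image.mp hk'
      exact ⟨Ecyc n i, ⟨i, rfl⟩, hσE i⟩
  refine ⟨σ, hlab, ?_⟩
  intro σ' hσ'
  have hσ'' : Set.BijOn σ' (Set.range (Ecyc n)) (Set.Icc 1 (n+3)) := by
    have := hσ'
    rw [IsEdgeLabeling, hcard, hG, cyc_edgeSet] at this
    exact this
  set a' : Fin (n+3) → ℕ := fun i => σ' (Ecyc n i) with ha'
  have hinj' : Function.Injective a' := by
    intro i j h
    exact Ecyc_inj n (hσ''.injOn ⟨i, rfl⟩ ⟨j, rfl⟩ h)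
  have hmem' : ∀ i, a' i ∈ Finset.Icc 1 (n+3) :=
    fun i => Finset.mem_Icc.mpr (Set.mem_Icc.mp (hσ''.mapsTo ⟨i, rfl⟩))
  have hpop : ∀ v, popularity G σ v = a (v-1) + a v := by
    intro v
    rw [hG, pop_formula n σ v, hσE, hσE]
  have hpop' : ∀ v, popularity G σ' v = a' (v-1) + a' v := by
    intro v
    rw [hG, pop_formula n σ' v]
  constructor
  · obtain ⟨v₀, hv₀⟩ := ub_min n a' hinj' hmem'
    have h1 : sInf (Set.range (popularity G σ')) ≤ n+3 := by
      refine le_trans (Nat.sInf_le ⟨v₀, rfl⟩) ?_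
      rw [hpop' v₀]
      exact hv₀
    have h2 : n+3 ≤ sInf (Set.range (popularity G σ)) := by
      have hne : (Set.range (popularity G σ)).Nonempty := ⟨_, ⟨0, rfl⟩⟩
      obtain ⟨v₁, hv₁⟩ := Nat.sInf_mem hne
      rw [← hv₁, hpop v₁]
      exact hge v₁
    omega
  · have hcast : ∀ (τ : Sym2 (Fin (n+3)) → ℕ) (b : Fin (n+3) → ℕ),
        (∀ v, popularity G τ v = b (v-1) + b v) →
        (∑ v : Fin (n+3), ((popularity G τ v : ℚ) - (((n+3 : ℕ) : ℚ) + 1)) ^ 2)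
          = ((∑ v : Fin (n+3), ((b (v-1) : ℤ) + b v - ((n:ℤ)+4))^2 : ℤ) : ℚ) := by
      intro τ b hb
      push_cast
      refine Finset.sum_congr rfl fun v _ => ?_
      rw [hb v]
      push_cast
      ring
    rw [hcast σ a hpop, hcast σ' a' hpop']
    apply Int.cast_le.mpr
    rw [hvar]
    exact lb_var n a' hinj' hmem'

/-- For every `θ ≥ 3` there is an edge labeling of the cycle `C_θ`
that is simultaneously optimal for the MaxMinSum problem (it maximizes the minimum
popularity `min_v p_v`) and the MinVar problem (it minimizes the access-variance
`Σ_v (p_v − (θ+1))²`). -/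
theorem statement13 (θ : ℕ) (hθ : 3 ≤ θ) :
    ∃ σ : Sym2 (Fin θ) → ℕ, IsEdgeLabeling (SimpleGraph.cycleGraph θ) σ ∧
      ∀ σ' : Sym2 (Fin θ) → ℕ, IsEdgeLabeling (SimpleGraph.cycleGraph θ) σ' →
        sInf (Set.range (popularity (SimpleGraph.cycleGraph θ) σ')) ≤
            sInf (Set.range (popularity (SimpleGraph.cycleGraph θ) σ)) ∧
          (∑ v : Fin θ, ((popularity (SimpleGraph.cycleGraph θ) σ v : ℚ) - (θ + 1)) ^ 2) ≤
            ∑ v : Fin θ, ((popularity (SimpleGraph.cycleGraph θ) σ' v : ℚ) - (θ + 1)) ^ 2 := by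
  obtain ⟨n, rfl⟩ : ∃ n, θ = n + 3 := ⟨θ - 3, by omega⟩
  exact statement13' n
end

section
/- For every integer θ ≥ 3, the maximum over all bijections σ from the edge set of the cycle C_θ to {1,…,θ} of the access-minsum min_v p_v(σ) is exactly θ. -/
open Finset

namespace St14
open SimpleGraph
open Fin.CommRing

def E (n : ℕ) (i : Fin (n+3)) : Sym2 (Fin (n+3)) := s(i, i+1)

lemma two_ne_zero' (n : ℕ) : (2 : Fin (n+3)) ≠ 0 := by
  simp [Fin.ext_iff, Fin.val_two]
  rw [Nat.mod_eq_of_lt (by omega)]; omega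

lemma E_inj (n : ℕ) : Function.Injective (E n) := by
  intro i j h
  rw [E, E, Sym2.eq_iff] at h
  rcases h with ⟨h1, _⟩ | ⟨h1, h2⟩
  · exact h1
  · exfalso
    have h3 : i = i + 2 := by
      calc i = j + 1 := h1
        _ = (i + 1) + 1 := by rw [h2]
        _ = i + 2 := by ring
    exact two_ne_zero' n (left_eq_add.mp h3)

lemma adj_iff {n : ℕ} {u v : Fin (n+3)} :
    (cycleGraph (n+3)).Adj u v ↔ u = v + 1 ∨ v = u + 1 := by
  have : (n + 3) = (n + 1) + 2 := by ring
  rw [show (cycleGraph (n+3)) = cycleGraph ((n+1)+2) by rw [← this]]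
  rw [cycleGraph_adj]
  constructor
  · rintro (h | h)
    · left; rw [← h]; ring
    · right; rw [← h]; ring
  · rintro (h | h)
    · left; rw [h]; ring
    · right; rw [h]; ring

lemma edgeSet_eq (n : ℕ) : (cycleGraph (n+3)).edgeSet = Set.range (E n) := by
  ext e
  induction e using Sym2.ind with
  | _ u v =>
    rw [mem_edgeSet, adj_iff]
    constructor
    · rintro (h | h)
      · exact ⟨v, by rw [E, h]; exact Sym2.eq_swap⟩
      · exact ⟨u, by rw [E, h]⟩
    · rintro ⟨i, hi⟩
      rw [E, Sym2.eq_iff] at hi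
      rcases hi with ⟨h1, h2⟩ | ⟨h1, h2⟩
      · right; rw [← h1, ← h2]
      · left; rw [← h1, ← h2]

lemma card_edgeSet (n : ℕ) : Nat.card (cycleGraph (n+3)).edgeSet = n + 3 := by
  rw [edgeSet_eq, Nat.card_range_of_injective (E_inj n), Nat.card_eq_fintype_card,
    Fintype.card_fin]

lemma filter_eq (n : ℕ) (v : Fin (n+3)) {inst : Fintype (cycleGraph (n+3)).edgeSet}
    {dp : DecidablePred (fun e : Sym2 (Fin (n+3)) => v ∈ e)} :
    @Finset.filter _ (fun e => v ∈ e) dp (@SimpleGraph.edgeFinset _ (cycleGraph (n+3)) inst)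
      = {E n (v-1), E n v} := by
  ext e
  simp only [mem_filter, mem_edgeFinset, Set.mem_toFinset, edgeSet_eq, Set.mem_range,
    mem_insert, mem_singleton]
  constructor
  · rintro ⟨⟨i, rfl⟩, hv⟩
    rw [E, Sym2.mem_iff] at hv
    rcases hv with rfl | rfl
    · right; rfl
    · left; congr 1; ring
  · rintro (rfl | rfl)
    · exact ⟨⟨v - 1, rfl⟩, by rw [E, Sym2.mem_iff]; right; ring⟩
    · exact ⟨⟨v, rfl⟩, by rw [E, Sym2.mem_iff]; left; rfl⟩

lemma one_ne_zero' (n : ℕ) : (1 : Fin (n+3)) ≠ 0 := by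
  simp [Fin.ext_iff]

lemma E_ne (n : ℕ) (v : Fin (n+3)) : E n (v - 1) ≠ E n v := by
  intro h
  have := E_inj n h
  exact one_ne_zero' n (sub_eq_self.mp this)

lemma popularity_eq (n : ℕ) (σ : Sym2 (Fin (n+3)) → ℕ) (v : Fin (n+3)) :
    popularity (cycleGraph (n+3)) σ v = σ (E n (v-1)) + σ (E n v) := by
  classical
  unfold popularity
  rw [filter_eq n v, Finset.sum_pair (E_ne n v)]

lemma val_sub_one (n : ℕ) (v : Fin (n+3)) :
    (v - 1).val = if v.val = 0 then n + 2 else v.val - 1 := by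
  rw [Fin.sub_def]
  simp only [Fin.val_one]
  by_cases h : v.val = 0
  · simp [h, Nat.mod_eq_of_lt]
  · rw [if_neg h]
    have h2 : n + 3 - 1 + v.val = (n+3) + (v.val - 1) := by omega
    rw [h2, Nat.add_mod_left, Nat.mod_eq_of_lt (by omega)]

def lab (n : ℕ) (i : Fin (n+3)) : ℕ :=
  if i.val % 2 = 0 then (n+3) - i.val/2 else (i.val+1)/2

noncomputable def σ₀ (n : ℕ) : Sym2 (Fin (n+3)) → ℕ :=
  fun e => ∑ i : Fin (n+3), if e = E n i then lab n i else 0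

lemma σ₀_apply (n : ℕ) (i : Fin (n+3)) : σ₀ n (E n i) = lab n i := by
  rw [σ₀, Finset.sum_eq_single i]
  · rw [if_pos rfl]
  · intro j _ hj
    rw [if_neg fun h => hj (E_inj n h.symm)]
  · intro h; exact absurd (Finset.mem_univ i) h

lemma lab_pos (n : ℕ) (i : Fin (n+3)) : 1 ≤ lab n i ∧ lab n i ≤ n + 3 := by
  have := i.is_lt
  rw [lab]; split_ifs <;> omega

lemma lab_inj (n : ℕ) : Function.Injective (lab n) := by
  intro i j h
  have hi := i.is_lt
  have hj := j.is_lt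
  rw [lab, lab] at h
  have : i.val = j.val := by split_ifs at h <;> omega
  exact Fin.ext this

lemma lab_surj (n : ℕ) (k : ℕ) (h1 : 1 ≤ k) (h2 : k ≤ n + 3) : ∃ i : Fin (n+3), lab n i = k := by
  by_cases h : 2 * k ≤ n + 3
  · exact ⟨⟨2*k - 1, by omega⟩, by rw [lab]; simp only; split_ifs <;> omega⟩
  · exact ⟨⟨2*((n+3) - k), by omega⟩, by rw [lab]; simp only; split_ifs <;> omega⟩

lemma pop_ge (n : ℕ) (v : Fin (n+3)) : n + 3 ≤ lab n (v - 1) + lab n v := by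
  have hv := v.is_lt
  have hs := val_sub_one n v
  have h1 : (v - 1).val < n + 3 := (v-1).is_lt
  rw [lab, lab]
  split_ifs at hs ⊢ <;> omega

lemma pop_two (n : ℕ) : lab n (2 - 1) + lab n 2 = n + 3 := by
  have h2 : ((2 : Fin (n+3))).val = 2 := by
    rw [Fin.val_two]
  have h1 : ((2 : Fin (n+3)) - 1).val = 1 := by
    rw [val_sub_one, h2]
    norm_num
  rw [lab, lab, h1, h2]
  norm_num
  omega

end St14

open St14 SimpleGraph Fin.CommRing in
/-- For every `θ ≥ 3`, the maximum over all edge labelings `σ` of the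
cycle `C_θ` of the access-minsum `min_v p_v(σ)` is exactly `θ`. -/
theorem statement14 (θ : ℕ) (hθ : 3 ≤ θ) :
    IsGreatest { s | ∃ σ : Sym2 (Fin θ) → ℕ, IsEdgeLabeling (SimpleGraph.cycleGraph θ) σ ∧
      sInf (Set.range (popularity (SimpleGraph.cycleGraph θ) σ)) = s } θ := by
  obtain ⟨n, rfl⟩ : ∃ n, θ = n + 3 := ⟨θ - 3, by omega⟩
  constructor
  · refine ⟨σ₀ n, ?_, ?_⟩
    · rw [IsEdgeLabeling, card_edgeSet, edgeSet_eq]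
      refine ⟨?_, ?_, ?_⟩
      · rintro e ⟨i, rfl⟩
        rw [σ₀_apply]
        exact Set.mem_Icc.mpr (lab_pos n i)
      · rintro e ⟨i, rfl⟩ f ⟨j, rfl⟩ h
        rw [σ₀_apply, σ₀_apply] at h
        rw [lab_inj n h]
      · intro k hk
        rw [Set.mem_Icc] at hk
        obtain ⟨i, hi⟩ := lab_surj n k hk.1 hk.2
        exact ⟨E n i, ⟨i, rfl⟩, by rw [σ₀_apply, hi]⟩
    · apply le_antisymm
      · exact Nat.sInf_le ⟨2, by rw [popularity_eq, σ₀_apply, σ₀_apply, pop_two]⟩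
      · apply le_csInf (Set.range_nonempty _)
        rintro s ⟨v, rfl⟩
        rw [popularity_eq, σ₀_apply, σ₀_apply]
        exact pop_ge n v
  · rintro s ⟨σ, hσ, rfl⟩
    rw [IsEdgeLabeling, card_edgeSet, edgeSet_eq] at hσ
    obtain ⟨e, he, h1⟩ := hσ.surjOn (Set.mem_Icc.mpr ⟨le_refl 1, by omega⟩)
    obtain ⟨i, rfl⟩ := he
    have hne : E n (i - 1) ≠ E n (i + 1) := by
      intro h
      have h2 := E_inj n h
      have h3 : i = i + 2 := by
        calc i = (i - 1) + 1 := by ring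
          _ = (i + 1) + 1 := by rw [h2]
          _ = i + 2 := by ring
      exact two_ne_zero' n (left_eq_add.mp h3)
    have hm1 : σ (E n (i-1)) ∈ Set.Icc 1 (n+3) := hσ.mapsTo ⟨i-1, rfl⟩
    have hm2 : σ (E n (i+1)) ∈ Set.Icc 1 (n+3) := hσ.mapsTo ⟨i+1, rfl⟩
    rw [Set.mem_Icc] at hm1 hm2
    have hinj : σ (E n (i-1)) ≠ σ (E n (i+1)) :=
      fun h => hne (hσ.injOn ⟨i-1, rfl⟩ ⟨i+1, rfl⟩ h)
    rcases le_or_gt (σ (E n (i-1))) (n+2) with hle | hgt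
    · calc sInf (Set.range (popularity (cycleGraph (n+3)) σ))
          ≤ popularity (cycleGraph (n+3)) σ i := Nat.sInf_le ⟨i, rfl⟩
        _ ≤ n + 3 := by rw [popularity_eq, h1]; omega
    · have h2 : σ (E n (i+1)) ≤ n + 2 := by omega
      calc sInf (Set.range (popularity (cycleGraph (n+3)) σ))
          ≤ popularity (cycleGraph (n+3)) σ (i+1) := Nat.sInf_le ⟨i+1, rfl⟩
        _ ≤ n + 3 := by
            rw [popularity_eq, show i + 1 - 1 = i by ring, h1]
            omega
end

section
/- Let H₁ = (V,E₁) be a d₁-regular graph and H₂ = (V,E₂) a d₂-regular graph on the same finite vertex set V with E₁ ∩ E₂ = ∅, and suppose H₁ is supermagic. Then the (d₁+d₂)-regular graph G = (V, E₁ ∪ E₂) satisfies MinVar(G) ≤ MinVar(H₂). -/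
open Finset

/-- The access-variance of a `d`-regular graph `G` under edge labeling `σ`:
`Σ_v (p_v − d(θ+1)/2)²`, where `θ` is the number of edges of `G`. -/
noncomputable def accessVar {V : Type*} [Fintype V] (G : SimpleGraph V) (d : ℕ)
    (σ : Sym2 V → ℕ) : ℝ :=
  ∑ v : V, ((popularity G σ v : ℝ) - d * (Nat.card G.edgeSet + 1) / 2) ^ 2

/-- `MinVar(G)`: the minimum of the access-variance over all edge labelings of the
`d`-regular graph `G` (the infimum of the finite nonempty set of achievable values). -/
noncomputable def minVar {V : Type*} [Fintype V] (G : SimpleGraph V) (d : ℕ) : ℝ :=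
  sInf { x | ∃ σ : Sym2 V → ℕ, IsEdgeLabeling G σ ∧ accessVar G d σ = x }

/-- A graph `H` is supermagic if its edges can be labeled bijectively with consecutive
positive integers `a, a+1, …, a+|E|−1` so that all vertex sums are equal. -/
def Supermagic {V : Type*} [Fintype V] (H : SimpleGraph V) : Prop :=
  ∃ (a : ℕ) (σ : Sym2 V → ℕ) (c : ℕ), 0 < a ∧
    Set.BijOn σ H.edgeSet (Set.Icc a (a + Nat.card H.edgeSet - 1)) ∧
    ∀ v : V, popularity H σ v = c

-- test: existence of a labeling
lemma exists_labeling {V : Type*} [Fintype V] (G : SimpleGraph V) :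
    ∃ σ : Sym2 V → ℕ, IsEdgeLabeling G σ := by
  classical
  have hcard : Nat.card G.edgeSet = G.edgeFinset.card := by
    rw [Nat.card_eq_fintype_card, SimpleGraph.edgeFinset, Set.toFinset_card]
  have hc : G.edgeFinset.card = (Finset.Icc 1 (Nat.card G.edgeSet)).card := by
    rw [Nat.card_Icc, hcard]; omega
  let e := Finset.equivOfCardEq hc
  refine ⟨fun x => if h : x ∈ G.edgeFinset then (e ⟨x, h⟩ : ℕ) else 0, ?_, ?_, ?_⟩
  · intro x hx
    have h : x ∈ G.edgeFinset := SimpleGraph.mem_edgeFinset.mpr hx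
    simp only [dif_pos h]
    have := (e ⟨x, h⟩).2
    rw [Finset.mem_Icc] at this
    exact Set.mem_Icc.mpr this
  · intro x hx y hy hxy
    have h : x ∈ G.edgeFinset := SimpleGraph.mem_edgeFinset.mpr hx
    have h' : y ∈ G.edgeFinset := SimpleGraph.mem_edgeFinset.mpr hy
    simp only [dif_pos h, dif_pos h'] at hxy
    have := e.injective (Subtype.ext hxy)
    exact congrArg Subtype.val this
  · intro y hy
    have hy' : y ∈ Finset.Icc 1 (Nat.card G.edgeSet) := Finset.mem_Icc.mpr (Set.mem_Icc.mp hy)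
    refine ⟨(e.symm ⟨y, hy'⟩ : Sym2 V), ?_, ?_⟩
    · exact SimpleGraph.mem_edgeFinset.mp (e.symm ⟨y, hy'⟩).2
    · have h : ((e.symm ⟨y, hy'⟩ : {x // x ∈ G.edgeFinset}) : Sym2 V) ∈ G.edgeFinset :=
        (e.symm ⟨y, hy'⟩).2
      simp only [dif_pos h]
      have h2 : (⟨_, h⟩ : {x // x ∈ G.edgeFinset}) = e.symm ⟨y, hy'⟩ := rfl
      rw [h2, Equiv.apply_symm_apply]

lemma card_filter_mem_eq_two {V : Type*} [Fintype V] [DecidableEq V] (G : SimpleGraph V)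
    [Fintype G.edgeSet] {e : Sym2 V} (he : e ∈ G.edgeFinset) :
    (Finset.univ.filter (fun v : V => v ∈ e)).card = 2 := by
  classical
  induction e with
  | _ x y =>
    have hadj : G.Adj x y := by
      rw [SimpleGraph.mem_edgeFinset] at he; exact he
    have hxy : x ≠ y := hadj.ne
    have : Finset.univ.filter (fun v : V => v ∈ s(x, y)) = {x, y} := by
      ext v; simp [Sym2.mem_iff]
    rw [this, Finset.card_insert_of_notMem (by simp [hxy]), Finset.card_singleton]

open scoped Classical in
lemma sum_popularity {V : Type*} [Fintype V] (G : SimpleGraph V) (σ : Sym2 V → ℕ) :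
    ∑ v : V, popularity G σ v = 2 * ∑ e ∈ G.edgeFinset, σ e := by
  classical
  unfold popularity
  simp only [Finset.sum_filter]
  rw [Finset.sum_comm]
  rw [Finset.mul_sum]
  refine Finset.sum_congr rfl fun e he => ?_
  rw [← Finset.sum_filter, Finset.sum_const, smul_eq_mul,
    card_filter_mem_eq_two G he]

open scoped Classical in
lemma sum_labels {V : Type*} [Fintype V] (G : SimpleGraph V) (σ : Sym2 V → ℕ) {a b : ℕ}
    (h : Set.BijOn σ G.edgeSet (Set.Icc a b)) :
    ∑ e ∈ G.edgeFinset, σ e = ∑ k ∈ Finset.Icc a b, k := by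
  classical
  refine Finset.sum_bij (fun e _ => σ e) ?_ ?_ ?_ ?_
  · intro e he
    exact Finset.mem_Icc.mpr (Set.mem_Icc.mp (h.mapsTo (SimpleGraph.mem_edgeFinset.mp he)))
  · intro x hx y hy hxy
    exact h.injOn (SimpleGraph.mem_edgeFinset.mp hx) (SimpleGraph.mem_edgeFinset.mp hy) hxy
  · intro k hk
    obtain ⟨e, he, hσe⟩ := h.surjOn (Set.mem_Icc.mpr (Finset.mem_Icc.mp hk))
    exact ⟨e, SimpleGraph.mem_edgeFinset.mpr he, hσe⟩
  · intro e _; rfl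

lemma gauss_icc (a θ : ℕ) (ha : 1 ≤ a) :
    2 * (∑ k ∈ Finset.Icc a (a + θ - 1), k) + θ = θ * (2 * a + θ) := by
  induction θ with
  | zero =>
    rw [Finset.Icc_eq_empty (by omega)]
    simp
  | succ m ih =>
    have h1 : a + (m + 1) - 1 = (a + m - 1) + 1 := by omega
    rw [h1, Finset.sum_Icc_succ_top (by omega)]
    have h2 : a + m - 1 + 1 = a + m := by omega
    rw [h2]
    nlinarith [ih]

lemma popularity_def {V : Type*} [Fintype V] [DecidableEq V] (G : SimpleGraph V)
    [Fintype G.edgeSet] (σ : Sym2 V → ℕ) (v : V) :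
    popularity G σ v = ∑ e ∈ G.edgeFinset.filter (fun e => v ∈ e), σ e := by
  classical
  unfold popularity
  apply Finset.sum_congr _ (fun _ _ => rfl)
  ext e
  simp [SimpleGraph.mem_edgeFinset]

open scoped Classical in
lemma sum_popularity_card {V : Type*} [Fintype V] (G : SimpleGraph V) (σ : Sym2 V → ℕ)
    {a b : ℕ} (h : Set.BijOn σ G.edgeSet (Set.Icc a b)) :
    ∑ v : V, popularity G σ v = 2 * ∑ k ∈ Finset.Icc a b, k := by
  rw [sum_popularity, sum_labels G σ h]

lemma popularity_const_one {V : Type*} [Fintype V] (G : SimpleGraph V) [DecidableRel G.Adj]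
    (v : V) : popularity G (fun _ => 1) v = G.degree v := by
  classical
  rw [popularity_def, Finset.sum_const, smul_eq_mul, mul_one,
    ← SimpleGraph.card_incidenceFinset_eq_degree]
  congr 1
  ext e
  simp [SimpleGraph.mem_incidenceFinset, SimpleGraph.incidenceSet, SimpleGraph.mem_edgeFinset]

open scoped Classical in
lemma key_construction {V : Type*} [Fintype V] (H₁ H₂ : SimpleGraph V) (d₁ d₂ a c : ℕ)
    (σ₁ σ₂ : Sym2 V → ℕ)
    (hdisj : Disjoint H₁.edgeSet H₂.edgeSet) (ha : 1 ≤ a)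
    (hbij₁ : Set.BijOn σ₁ H₁.edgeSet (Set.Icc a (a + Nat.card H₁.edgeSet - 1)))
    (hmag : ∀ v, popularity H₁ σ₁ v = c)
    (hdeg1 : ∀ v, popularity H₁ (fun _ => 1) v = d₁)
    (hnd1 : Fintype.card V * d₁ = 2 * Nat.card H₁.edgeSet)
    (hnd2 : Fintype.card V * d₂ = 2 * Nat.card H₂.edgeSet)
    (hσ₂ : IsEdgeLabeling H₂ σ₂) :
    ∃ τ, IsEdgeLabeling (H₁ ⊔ H₂) τ ∧
      accessVar (H₁ ⊔ H₂) (d₁ + d₂) τ = accessVar H₂ d₂ σ₂ := by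
  set θ₁ := Nat.card H₁.edgeSet with hθ₁def
  set θ₂ := Nat.card H₂.edgeSet with hθ₂def
  set n := Fintype.card V with hndef
  have hbij₂ : Set.BijOn σ₂ H₂.edgeSet (Set.Icc 1 θ₂) := hσ₂
  set τ : Sym2 V → ℕ := fun e =>
    if e ∈ H₂.edgeSet then σ₂ e else if e ∈ H₁.edgeSet then σ₁ e + (θ₂ + 1) - a else 0
    with hτdef
  have hτ1 : ∀ e ∈ H₁.edgeSet, τ e = σ₁ e + (θ₂ + 1) - a := by
    intro e he
    have h2 : e ∉ H₂.edgeSet := Set.disjoint_left.mp hdisj he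
    simp [hτdef, h2, he]
  have hτ2 : ∀ e ∈ H₂.edgeSet, τ e = σ₂ e := by
    intro e he; simp [hτdef, he]
  have hσ₁mem : ∀ e ∈ H₁.edgeSet, a ≤ σ₁ e ∧ σ₁ e ≤ a + θ₁ - 1 :=
    fun e he => Set.mem_Icc.mp (hbij₁.mapsTo he)
  have hθG : Nat.card (H₁ ⊔ H₂).edgeSet = θ₁ + θ₂ := by
    rw [Nat.card_coe_set_eq, SimpleGraph.edgeSet_sup,
      Set.ncard_union_eq hdisj (Set.toFinite _) (Set.toFinite _),
      hθ₁def, hθ₂def, Nat.card_coe_set_eq, Nat.card_coe_set_eq]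
  have b1 : Set.BijOn τ H₁.edgeSet (Set.Icc (θ₂ + 1) (θ₂ + θ₁)) := by
    refine ⟨?_, ?_, ?_⟩
    · intro e he
      obtain ⟨l, u⟩ := hσ₁mem e he
      rw [hτ1 e he, Set.mem_Icc]
      omega
    · intro x hx y hy hxy
      obtain ⟨lx, _⟩ := hσ₁mem x hx
      obtain ⟨ly, _⟩ := hσ₁mem y hy
      rw [hτ1 x hx, hτ1 y hy] at hxy
      exact hbij₁.injOn hx hy (by omega)
    · intro m hm
      rw [Set.mem_Icc] at hm
      have hk : m + a - (θ₂ + 1) ∈ Set.Icc a (a + θ₁ - 1) := by rw [Set.mem_Icc]; omega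
      obtain ⟨e, he, hσe⟩ := hbij₁.surjOn hk
      exact ⟨e, he, by rw [hτ1 e he]; omega⟩
  have b2 : Set.BijOn τ H₂.edgeSet (Set.Icc 1 θ₂) :=
    hbij₂.congr (fun e he => (hτ2 e he).symm)
  have hinj : Set.InjOn τ (H₁.edgeSet ∪ H₂.edgeSet) := by
    rw [Set.injOn_union hdisj]
    refine ⟨b1.injOn, b2.injOn, ?_⟩
    intro x hx y hy
    have h1 := Set.mem_Icc.mp (b1.mapsTo hx)
    have h2 := Set.mem_Icc.mp (b2.mapsTo hy)
    omega
  have bG : IsEdgeLabeling (H₁ ⊔ H₂) τ := by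
    unfold IsEdgeLabeling
    rw [hθG, SimpleGraph.edgeSet_sup]
    have hicc : Set.Icc 1 (θ₁ + θ₂) = Set.Icc (θ₂ + 1) (θ₂ + θ₁) ∪ Set.Icc 1 θ₂ := by
      ext k; simp only [Set.mem_Icc, Set.mem_union]; omega
    rw [hicc]
    exact b1.union b2 hinj
  have hc_sum : n * c = 2 * ∑ k ∈ Finset.Icc a (a + θ₁ - 1), k := by
    rw [← sum_popularity_card H₁ σ₁ hbij₁]
    simp [hmag, Finset.sum_const, mul_comm]
    exact Or.inl rfl
  have hkey : n * c + θ₁ = θ₁ * (2 * a + θ₁) := by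
    have hg := gauss_icc a θ₁ ha
    omega
  refine ⟨τ, bG, ?_⟩
  cases isEmpty_or_nonempty V with
  | inl h => unfold accessVar; simp
  | inr h =>
    have hn : 0 < n := Fintype.card_pos
    have hn' : (n : ℝ) ≠ 0 := Nat.cast_ne_zero.mpr hn.ne'
    have hid : (c : ℝ) + d₁ * ((θ₂ : ℝ) + 1) - d₁ * a
        = (d₁ + d₂) * ((θ₁ : ℝ) + θ₂ + 1) / 2 - d₂ * ((θ₂ : ℝ) + 1) / 2 := by
      have h1 : (n : ℝ) * c + θ₁ = θ₁ * (2 * a + θ₁) := by exact_mod_cast hkey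
      have h2 : (n : ℝ) * d₁ = 2 * θ₁ := by exact_mod_cast hnd1
      have h3 : (n : ℝ) * d₂ = 2 * θ₂ := by exact_mod_cast hnd2
      have hc' : (c : ℝ) = (θ₁ * (2 * a + θ₁) - θ₁) / n := by field_simp; linarith
      have hd1 : (d₁ : ℝ) = 2 * θ₁ / n := by field_simp; linarith
      have hd2 : (d₂ : ℝ) = 2 * θ₂ / n := by field_simp; linarith
      rw [hc', hd1, hd2]
      field_simp
      ring
    have hpop : ∀ v : V, (popularity (H₁ ⊔ H₂) τ v : ℝ)
        = (popularity H₂ σ₂ v : ℝ) + c + d₁ * ((θ₂ : ℝ) + 1) - d₁ * a := by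
      intro v
      have hsplit : popularity (H₁ ⊔ H₂) τ v
          = (∑ e ∈ H₁.edgeFinset.filter (fun e => v ∈ e), τ e) + popularity H₂ τ v := by
        rw [popularity_def, popularity_def]
        have hE : (H₁ ⊔ H₂).edgeFinset = H₁.edgeFinset ∪ H₂.edgeFinset := by
          ext e; simp [SimpleGraph.mem_edgeFinset]
        rw [hE, Finset.filter_union, Finset.sum_union]
        apply Finset.disjoint_filter_filter
        rw [Finset.disjoint_left]
        intro e he1 he2
        exact Set.disjoint_left.mp hdisj (SimpleGraph.mem_edgeFinset.mp he1)
          (SimpleGraph.mem_edgeFinset.mp he2)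
      have hpop2 : popularity H₂ τ v = popularity H₂ σ₂ v := by
        rw [popularity_def, popularity_def]
        exact Finset.sum_congr rfl fun e he =>
          hτ2 e (SimpleGraph.mem_edgeFinset.mp (Finset.mem_filter.mp he).1)
      have hcardF : (H₁.edgeFinset.filter (fun e => v ∈ e)).card = d₁ := by
        have hh := hdeg1 v
        rw [popularity_def] at hh
        simpa using hh
      have hpart0 : (popularity H₁ σ₁ v : ℝ)
          = ∑ e ∈ H₁.edgeFinset.filter (fun e => v ∈ e), (σ₁ e : ℝ) := by
        rw [popularity_def]
        push_cast
        rfl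
      have hpart1 : ((∑ e ∈ H₁.edgeFinset.filter (fun e => v ∈ e), τ e : ℕ) : ℝ)
          = (c : ℝ) + d₁ * ((θ₂ : ℝ) + 1) - d₁ * a := by
        push_cast
        have hstep : ∀ e ∈ H₁.edgeFinset.filter (fun e => v ∈ e),
            (τ e : ℝ) = (σ₁ e : ℝ) + (((θ₂ : ℝ) + 1) - a) := by
          intro e he
          have heE := SimpleGraph.mem_edgeFinset.mp (Finset.mem_filter.mp he).1
          have hle := (hσ₁mem e heE).1
          rw [hτ1 e heE, Nat.cast_sub (by omega)]
          push_cast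
          ring
        rw [Finset.sum_congr rfl hstep, Finset.sum_add_distrib, Finset.sum_const,
          nsmul_eq_mul, hcardF, ← hpart0, hmag v]
        ring
      rw [hsplit, hpop2, Nat.cast_add, hpart1]
      ring
    unfold accessVar
    rw [hθG]
    refine Finset.sum_congr rfl fun v _ => ?_
    rw [hpop v]
    push_cast
    linear_combination (2 * (popularity H₂ σ₂ v : ℝ) + c + d₁ * ((θ₂ : ℝ) + 1) - d₁ * a
      - (d₁ + d₂) * ((θ₁ : ℝ) + θ₂ + 1) / 2 - d₂ * ((θ₂ : ℝ) + 1) / 2) * hid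


set_option maxHeartbeats 1000000 in
/-- If `H₁` is a `d₁`-regular graph and `H₂` a `d₂`-regular graph on
the same vertex set with disjoint edge sets, and `H₁` is supermagic, then the
`(d₁+d₂)`-regular graph `G = H₁ ∪ H₂` satisfies `MinVar(G) ≤ MinVar(H₂)`. -/
theorem statement15 {V : Type*} [Fintype V] (H₁ H₂ : SimpleGraph V)
    [DecidableRel H₁.Adj] [DecidableRel H₂.Adj] (d₁ d₂ : ℕ)
    (h₁ : H₁.IsRegularOfDegree d₁) (h₂ : H₂.IsRegularOfDegree d₂)
    (hdisj : Disjoint H₁.edgeSet H₂.edgeSet) (hmagic : Supermagic H₁) :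
    minVar (H₁ ⊔ H₂) (d₁ + d₂) ≤ minVar H₂ d₂ := by
  classical
  obtain ⟨a, σ₁, c, ha, hbij₁, hmag⟩ := hmagic
  have hdeg1 : ∀ v, popularity H₁ (fun _ => 1) v = d₁ := fun v => by
    rw [popularity_const_one H₁ v, h₁ v]
  have hnd1 : Fintype.card V * d₁ = 2 * Nat.card H₁.edgeSet := by
    have hsum := H₁.sum_degrees_eq_twice_card_edges
    have hs1 : ∑ v, H₁.degree v = Fintype.card V * d₁ := by
      rw [Finset.sum_congr rfl fun v _ => h₁ v, Finset.sum_const, smul_eq_mul,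
        Finset.card_univ]
    rw [SimpleGraph.edgeFinset_card, ← Nat.card_eq_fintype_card] at hsum
    omega
  have hnd2 : Fintype.card V * d₂ = 2 * Nat.card H₂.edgeSet := by
    have hsum := H₂.sum_degrees_eq_twice_card_edges
    have hs1 : ∑ v, H₂.degree v = Fintype.card V * d₂ := by
      rw [Finset.sum_congr rfl fun v _ => h₂ v, Finset.sum_const, smul_eq_mul,
        Finset.card_univ]
    rw [SimpleGraph.edgeFinset_card, ← Nat.card_eq_fintype_card] at hsum
    omega
  obtain ⟨σ₂0, hσ₂0⟩ := exists_labeling H₂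
  unfold minVar
  refine le_csInf ⟨accessVar H₂ d₂ σ₂0, σ₂0, hσ₂0, rfl⟩ ?_
  rintro b ⟨σ₂, hlab, rfl⟩
  obtain ⟨τ, hτlab, hτval⟩ := key_construction H₁ H₂ d₁ d₂ a c σ₁ σ₂ hdisj ha hbij₁ hmag
    hdeg1 hnd1 hnd2 hlab
  apply csInf_le
  · refine ⟨0, ?_⟩
    rintro x ⟨σ, _, rfl⟩
    exact Finset.sum_nonneg fun v _ => sq_nonneg _
  · exact ⟨τ, hτlab, hτval⟩
end

section
/- For every positive integer r, the complete graph K_{4r} satisfies MinVar(K_{4r}) ≤ 3r if r is odd, and MinVar(K_{4r}) ≤ 7r if r is even. -/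
open Finset

namespace St16

/-- reduce `x` mod `n = 4r-1`, valid for `x < 3n` -/
def md (r x : ℕ) : ℕ :=
  if x < 4*r-1 then x else if x < 2*(4*r-1) then x - (4*r-1) else x - 2*(4*r-1)

/-- inner label value for a non-infinity pair in matching `m` at distance-slot `t` -/
def labval (r m t : ℕ) : ℕ :=
  if t = 1 then (if m < 2*r then r else r+1) else if t ≤ r then t-1 else t+1

def dd (a b : ℕ) : ℕ := max a b - min a b

def pairt (r a b : ℕ) : ℕ := min (dd a b) (4*r-1 - dd a b)

/-- the edge label of `{a,b}` in `K_{4r}`, vertices `0..4r-1` with `4r-1 = ∞`. -/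
def lab (r a b : ℕ) : ℕ :=
  if a = 4*r-1 ∨ b = 4*r-1 then
    2*r * md r (2 * min a b) + (if md r (2 * min a b) < 2*r then r+1 else r)
  else 2*r * md r (a+b) + labval r (md r (a+b)) (pairt r a b)

lemma lab_symm (r a b : ℕ) : lab r a b = lab r b a := by
  unfold lab pairt dd
  rw [Nat.add_comm b a, Nat.min_comm b a, Nat.max_comm b a]
  by_cases h : a = 4*r-1 ∨ b = 4*r-1
  · rw [if_pos h, if_pos h.symm]
  · rw [if_neg h, if_neg (fun hc => h hc.symm)]

/-- the labeling as a function on `Sym2 (Fin (4r))` -/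
def sig (r : ℕ) : Sym2 (Fin (4*r)) → ℕ :=
  Sym2.lift ⟨fun a b => lab r a b, fun a b => lab_symm r a b⟩

@[simp] lemma sig_mk (r : ℕ) (a b : Fin (4*r)) : sig r s(a,b) = lab r a b := rfl

/-- decomposition: every label is `2r*m + v` with `m < 4r-1`, `1 ≤ v ≤ 2r` -/
lemma lab_decomp (r a b : ℕ) (hr : 1 ≤ r) (ha : a < 4*r) (hb : b < 4*r) (hab : a ≠ b) :
    ∃ m v, lab r a b = 2*r*m + v ∧ m < 4*r-1 ∧ 1 ≤ v ∧ v ≤ 2*r := by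
  unfold lab labval md pairt dd
  split_ifs <;>
    first
      | exact ⟨_, _, rfl, by omega, by omega, by omega⟩

lemma block_eq {r m v m' v' : ℕ} (h1 : 1 ≤ v) (h2 : v ≤ 2*r) (h3 : 1 ≤ v') (h4 : v' ≤ 2*r)
    (h : 2*r*m + v = 2*r*m' + v') : m = m' ∧ v = v' := by
  have hm : m = m' := by
    rcases lt_trichotomy m m' with h' | h' | h'
    · have := Nat.mul_le_mul_left (2*r) (Nat.succ_le_of_lt h')
      rw [Nat.mul_succ] at this; omega
    · exact h'
    · have := Nat.mul_le_mul_left (2*r) (Nat.succ_le_of_lt h')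
      rw [Nat.mul_succ] at this; omega
  subst hm; omega

lemma pairt_bounds (r a b : ℕ) (hr : 1 ≤ r) (ha : a < 4*r-1) (hb : b < 4*r-1) (hab : a ≠ b) :
    1 ≤ pairt r a b ∧ pairt r a b ≤ 2*r-1 := by
  unfold pairt dd; omega

lemma labval_bounds (r m t : ℕ) (hr : 1 ≤ r) (h1 : 1 ≤ t) (h2 : t ≤ 2*r-1) :
    1 ≤ labval r m t ∧ labval r m t ≤ 2*r := by
  unfold labval; split_ifs <;> omega

lemma lab_fin (r a b : ℕ) (ha : a ≠ 4*r-1) (hb : b ≠ 4*r-1) :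
    lab r a b = 2*r * md r (a+b) + labval r (md r (a+b)) (pairt r a b) := by
  unfold lab; rw [if_neg (by tauto)]

lemma lab_inf' (r a b : ℕ) (h : a = 4*r-1 ∨ b = 4*r-1) :
    lab r a b = 2*r * md r (2 * min a b) + (if md r (2 * min a b) < 2*r then r+1 else r) := by
  unfold lab; rw [if_pos h]

lemma md_eq_imp (r x y : ℕ) (hx : x < 2*(4*r-1)) (hy : y < 2*(4*r-1)) (h : md r x = md r y) :
    x = y ∨ x = y + (4*r-1) ∨ y = x + (4*r-1) := by
  unfold md at h; split_ifs at h <;> omega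

lemma lab_inj (r : ℕ) (hr : 1 ≤ r) {a b a' b' : ℕ} (ha : a < 4*r) (hb : b < 4*r)
    (ha' : a' < 4*r) (hb' : b' < 4*r) (hab : a ≠ b) (hab' : a' ≠ b')
    (h : lab r a b = lab r a' b') : (a = a' ∧ b = b') ∨ (a = b' ∧ b = a') := by
  by_cases h1 : a = 4*r-1 ∨ b = 4*r-1 <;> by_cases h2 : a' = 4*r-1 ∨ b' = 4*r-1
  · -- both infinity edges
    rw [lab_inf' r a b h1, lab_inf' r a' b' h2] at h
    have hb1 := block_eq (v := if md r (2 * min a b) < 2*r then r+1 else r)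
      (v' := if md r (2 * min a' b') < 2*r then r+1 else r)
      (by split_ifs <;> omega) (by split_ifs <;> omega)
      (by split_ifs <;> omega) (by split_ifs <;> omega) h
    have hs := md_eq_imp r _ _ (by omega) (by omega) hb1.1
    omega
  · -- inf / fin
    rw [lab_inf' r a b h1, lab_fin r a' b' (by tauto) (by tauto)] at h
    have ht' := pairt_bounds r a' b' hr (by omega) (by omega) hab'
    have hlb := labval_bounds r (md r (a'+b')) (pairt r a' b') hr ht'.1 ht'.2
    have hb1 := block_eq (v := if md r (2 * min a b) < 2*r then r+1 else r)
      (by split_ifs <;> omega) (by split_ifs <;> omega) hlb.1 hlb.2 h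
    exfalso
    have h1' := hb1.1
    have h2' := hb1.2
    unfold labval at h2'
    split_ifs at h2' <;> omega
  · -- fin / inf
    rw [lab_fin r a b (by tauto) (by tauto), lab_inf' r a' b' h2] at h
    have ht := pairt_bounds r a b hr (by omega) (by omega) hab
    have hlb := labval_bounds r (md r (a+b)) (pairt r a b) hr ht.1 ht.2
    have hb1 := block_eq (v' := if md r (2 * min a' b') < 2*r then r+1 else r)
      hlb.1 hlb.2 (by split_ifs <;> omega) (by split_ifs <;> omega) h
    exfalso
    have h1' := hb1.1
    have h2' := hb1.2
    unfold labval at h2'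
    split_ifs at h2' <;> omega
  · -- both finite
    rw [lab_fin r a b (by tauto) (by tauto), lab_fin r a' b' (by tauto) (by tauto)] at h
    have ht := pairt_bounds r a b hr (by omega) (by omega) hab
    have ht' := pairt_bounds r a' b' hr (by omega) (by omega) hab'
    have hlb := labval_bounds r (md r (a+b)) (pairt r a b) hr ht.1 ht.2
    have hlb' := labval_bounds r (md r (a'+b')) (pairt r a' b') hr ht'.1 ht'.2
    have hb1 := block_eq hlb.1 hlb.2 hlb'.1 hlb'.2 h
    have hm := hb1.1
    have hv := hb1.2
    rw [hm] at hv
    have htt : pairt r a b = pairt r a' b' := by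
      unfold labval at hv; split_ifs at hv <;> omega
    have hdb : 1 ≤ dd a b ∧ dd a b < 4*r-1 := by unfold dd; omega
    have hdb' : 1 ≤ dd a' b' ∧ dd a' b' < 4*r-1 := by unfold dd; omega
    have hdd : dd a b = dd a' b' ∨ dd a b + dd a' b' = 4*r-1 := by
      unfold pairt at htt; omega
    have e1 : dd a b = max a b - min a b := rfl
    have e2 : dd a' b' = max a' b' - min a' b' := rfl
    have hs := md_eq_imp r _ _ (by omega) (by omega) hm
    omega

lemma card_edgeSet (r : ℕ) (hr : 1 ≤ r) :
    Nat.card (⊤ : SimpleGraph (Fin (4*r))).edgeSet = 2*r*(4*r-1) := by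
  rw [Nat.card_eq_fintype_card, ← SimpleGraph.edgeFinset_card,
    SimpleGraph.card_edgeFinset_top_eq_card_choose_two, Fintype.card_fin,
    Nat.choose_two_right]
  have h : 4*r*(4*r-1) = 2*(2*r*(4*r-1)) := by ring
  rw [h, Nat.mul_div_cancel_left _ (by norm_num)]

lemma sig_mapsTo (r : ℕ) (hr : 1 ≤ r) :
    Set.MapsTo (sig r) (⊤ : SimpleGraph (Fin (4*r))).edgeSet (Set.Icc 1 (2*r*(4*r-1))) := by
  intro e he
  induction e with
  | _ a b =>
    rw [SimpleGraph.mem_edgeSet, SimpleGraph.top_adj] at he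
    obtain ⟨m, v, hmv, hm, hv1, hv2⟩ := lab_decomp r ↑a ↑b hr a.isLt b.isLt
      (fun hc => he (Fin.ext hc))
    rw [sig_mk, hmv]
    constructor
    · omega
    · calc 2*r*m + v ≤ 2*r*m + 2*r := by omega
        _ = 2*r*(m+1) := by ring
        _ ≤ 2*r*(4*r-1) := Nat.mul_le_mul_left _ (by omega)

lemma sig_injOn (r : ℕ) (hr : 1 ≤ r) :
    Set.InjOn (sig r) (⊤ : SimpleGraph (Fin (4*r))).edgeSet := by
  intro e he e' he' h
  induction e with
  | _ a b =>
    induction e' with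
    | _ a' b' =>
      rw [SimpleGraph.mem_edgeSet, SimpleGraph.top_adj] at he he'
      rw [sig_mk, sig_mk] at h
      rcases lab_inj r hr a.isLt b.isLt a'.isLt b'.isLt
        (fun hc => he (Fin.ext hc)) (fun hc => he' (Fin.ext hc)) h with ⟨h1, h2⟩ | ⟨h1, h2⟩
      · rw [Sym2.eq_iff]; exact Or.inl ⟨Fin.ext h1, Fin.ext h2⟩
      · rw [Sym2.eq_iff]; exact Or.inr ⟨Fin.ext h1, Fin.ext h2⟩

lemma sig_bijOn (r : ℕ) (hr : 1 ≤ r) :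
    Set.BijOn (sig r) (⊤ : SimpleGraph (Fin (4*r))).edgeSet (Set.Icc 1 (2*r*(4*r-1))) := by
  refine ⟨sig_mapsTo r hr, sig_injOn r hr, ?_⟩
  have himg : sig r '' (⊤ : SimpleGraph (Fin (4*r))).edgeSet = Set.Icc 1 (2*r*(4*r-1)) := by
    apply Set.eq_of_subset_of_ncard_le (Set.mapsTo_iff_image_subset.mp (sig_mapsTo r hr)) ?_ (Set.finite_Icc _ _)
    · rw [Set.ncard_image_of_injOn (sig_injOn r hr)]
      have h1 : (Set.Icc 1 (2*r*(4*r-1))).ncard = 2*r*(4*r-1) := by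
        rw [← Nat.card_coe_set_eq, Nat.card_eq_fintype_card]
        simp [Nat.card_Icc]
      have h2 : (⊤ : SimpleGraph (Fin (4*r))).edgeSet.ncard = 2*r*(4*r-1) := by
        rw [← Nat.card_coe_set_eq, card_edgeSet r hr]
      omega
  rw [← himg]
  exact Set.surjOn_image _ _

lemma sig_isEdgeLabeling (r : ℕ) (hr : 1 ≤ r) :
    IsEdgeLabeling (⊤ : SimpleGraph (Fin (4*r))) (sig r) := by
  unfold IsEdgeLabeling
  rw [card_edgeSet r hr]
  exact sig_bijOn r hr

lemma popularity_add (r : ℕ) (σ : Sym2 (Fin (4*r)) → ℕ) (hr : 1 ≤ r) (v : Fin (4*r)) :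
    popularity ⊤ σ v + σ s(v,v) = ∑ u : Fin (4*r), σ s(v,u) := by
  classical
  have hset : ∀ (iF : Fintype ((⊤ : SimpleGraph (Fin (4*r))).edgeSet))
      (inst : DecidablePred (fun e : Sym2 (Fin (4*r)) => v ∈ e)),
      (@SimpleGraph.edgeFinset _ ⊤ iF).filter (fun e => v ∈ e)
        = (univ.erase v).image (fun u => s(v,u)) := by
    intro iF inst
    ext e
    induction e with
    | _ a b =>
      simp only [Finset.mem_filter, SimpleGraph.mem_edgeFinset, SimpleGraph.mem_edgeSet,
        SimpleGraph.top_adj, Finset.mem_image, Finset.mem_erase, Finset.mem_univ,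
        Sym2.mem_iff, and_true]
      constructor
      · rintro ⟨hab, hv | hv⟩
        · subst hv; exact ⟨b, by tauto, rfl⟩
        · subst hv; exact ⟨a, by tauto, Sym2.eq_swap⟩
      · rintro ⟨u, hu, he⟩
        rw [Sym2.eq_iff] at he
        rcases he with ⟨h1, h2⟩ | ⟨h1, h2⟩ <;> subst h1 <;> subst h2 <;> tauto
  unfold popularity
  have hinj : ∀ x ∈ univ.erase v, ∀ y ∈ univ.erase v,
      (fun u => s(v,u)) x = (fun u => s(v,u)) y → x = y := by
    intro x _ y _ h
    simp only [Sym2.eq_iff] at h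
    rcases h with ⟨-, h⟩ | ⟨h1, h2⟩
    · exact h
    · exact h2.trans h1
  rw [hset _ _, Finset.sum_image hinj]
  exact Finset.sum_erase_add _ _ (Finset.mem_univ v)

def shv (r c d : ℕ) : ℕ := if c + d < 4*r-1 then c + d else c + d - (4*r-1)

def bval (r t : ℕ) : ℕ := if t ≤ r then t-1 else t+1

lemma sum_md_double (r : ℕ) (hr : 1 ≤ r) (F : ℕ → ℕ) :
    ∑ c ∈ range (4*r-1), F (md r (2*c)) = ∑ m ∈ range (4*r-1), F m := by
  apply Finset.sum_nbij' (i := fun c => md r (2*c))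
    (j := fun m => if m % 2 = 0 then m/2 else (m + (4*r-1))/2)
  · intro a ha; simp only [Finset.mem_range] at *; unfold md; split_ifs <;> omega
  · intro a ha; simp only [Finset.mem_range] at *; split_ifs <;> omega
  · intro a ha; simp only [Finset.mem_range] at ha; unfold md; split_ifs <;> omega
  · intro a ha; simp only [Finset.mem_range] at ha; unfold md; split_ifs <;> omega
  · intro a _; rfl

lemma sum_md_shift (r c : ℕ) (hr : 1 ≤ r) (hc : c < 4*r-1) (F : ℕ → ℕ) :
    ∑ d ∈ range (4*r-1), F (md r (2*c+d)) = ∑ m ∈ range (4*r-1), F m := by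
  apply Finset.sum_nbij' (i := fun d => md r (2*c+d))
    (j := fun m => if md r (2*c) ≤ m then m - md r (2*c) else m + (4*r-1) - md r (2*c))
  · intro a ha; simp only [Finset.mem_range] at *; unfold md; split_ifs <;> omega
  · intro a ha; simp only [Finset.mem_range] at *; unfold md; split_ifs <;> omega
  · intro a ha; simp only [Finset.mem_range] at ha; unfold md; split_ifs <;> omega
  · intro a ha; simp only [Finset.mem_range] at ha; unfold md; split_ifs <;> omega
  · intro a _; rfl

lemma sum_range_T (r : ℕ) (hr : 1 ≤ r) :
    ∑ m ∈ range (4*r-1), m = (4*r-1)*(2*r-1) := by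
  have hg := Finset.sum_range_id_mul_two (4*r-1)
  have h1 : (4*r-1)*(4*r-1-1) = ((4*r-1)*(2*r-1))*2 := by
    obtain ⟨s, rfl⟩ : ∃ s, r = s+1 := ⟨r-1, by omega⟩
    have e1 : 4*(s+1)-1 = 4*s+3 := by omega
    have e2 : 4*(s+1)-1-1 = 4*s+2 := by omega
    have e3 : 2*(s+1)-1 = 2*s+1 := by omega
    rw [e2, e1, e3]; ring
  omega

lemma sum_ite_u (r : ℕ) (hr : 1 ≤ r) :
    ∑ m ∈ range (4*r-1), (if m < 2*r then r+1 else r) = 4*r*r + r := by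
  rw [Finset.range_eq_Ico,
    ← Finset.sum_Ico_consecutive _ (Nat.zero_le (2*r)) (by omega : 2*r ≤ 4*r-1)]
  have h1 : ∑ m ∈ Ico 0 (2*r), (if m < 2*r then r+1 else r) = 2*r*(r+1) := by
    rw [Finset.sum_congr rfl (fun m hm => if_pos (by simp only [Finset.mem_Ico] at hm; omega)),
      Finset.sum_const, Nat.card_Ico, smul_eq_mul]
    congr 1
  have h2 : ∑ m ∈ Ico (2*r) (4*r-1), (if m < 2*r then r+1 else r) = (2*r-1)*r := by
    rw [Finset.sum_congr rfl (fun m hm => if_neg (by simp only [Finset.mem_Ico] at hm; omega)),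
      Finset.sum_const, Nat.card_Ico, smul_eq_mul]
    congr 1; omega
  rw [h1, h2]
  have e1 : 2*r*(r+1) = 2*(r*r) + 2*r := by ring
  have e2 : r ≤ r*r := Nat.le_mul_of_pos_left r (by omega)
  have e3 : (2*r-1)*r = 2*(r*r) - r := by
    obtain ⟨s, rfl⟩ : ∃ s, r = s+1 := ⟨r-1, by omega⟩
    have e4 : 2*(s+1)-1 = 2*s+1 := by omega
    have a1 : (2*s+1)*(s+1) = 2*((s+1)*(s+1)) - (s+1) := by
      have b1 : (2*s+1)*(s+1) = 2*(s*s)+3*s+1 := by ring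
      have b2 : (s+1)*(s+1) = s*s+2*s+1 := by ring
      omega
    rw [e4, a1]
  have e5 : 4*r*r = 4*(r*r) := by ring
  omega

lemma bval_sum (r : ℕ) (hr : 1 ≤ r) :
    (∑ t ∈ Ico 2 (2*r), bval r t) + r + 1 = 2*(r*r) := by
  rw [← Finset.sum_Ico_consecutive (bval r) (show 2 ≤ r+1 by omega) (show r+1 ≤ 2*r by omega)]
  have h1 : ∑ t ∈ Ico 2 (r+1), bval r t = ∑ t ∈ Ico 2 (r+1), (t-1) :=
    Finset.sum_congr rfl (fun t ht => by
      unfold bval; rw [if_pos (by simp only [Finset.mem_Ico] at ht; omega)])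
  have h2 : ∑ t ∈ Ico (r+1) (2*r), bval r t = ∑ t ∈ Ico (r+1) (2*r), (t+1) :=
    Finset.sum_congr rfl (fun t ht => by
      unfold bval; rw [if_neg (by simp only [Finset.mem_Ico] at ht; omega)])
  rw [h1, h2, Finset.sum_Ico_eq_sum_range, Finset.sum_Ico_eq_sum_range]
  have e1 : r+1-2 = r-1 := by omega
  have e2 : 2*r-(r+1) = r-1 := by omega
  rw [e1, e2]
  have h3 : ∑ k ∈ range (r-1), (2+k-1) = (∑ k ∈ range (r-1), k) + (r-1) := by
    rw [Finset.sum_congr rfl (fun k _ => show 2+k-1 = k+1 by omega), Finset.sum_add_distrib,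
      Finset.sum_const, smul_eq_mul, Finset.card_range, mul_one]
  have h4 : ∑ k ∈ range (r-1), (r+1+k+1) = (∑ k ∈ range (r-1), k) + (r-1)*(r+2) := by
    rw [Finset.sum_congr rfl (fun k _ => show r+1+k+1 = k+(r+2) by omega), Finset.sum_add_distrib,
      Finset.sum_const, smul_eq_mul, Finset.card_range]
  rw [h3, h4]
  have hg := Finset.sum_range_id_mul_two (r-1)
  obtain ⟨s, rfl⟩ : ∃ s, r = s+1 := ⟨r-1, by omega⟩
  have e3 : s+1-1 = s := by omega
  rw [e3] at hg ⊢
  have e4 : s*(s-1) + s = s*s := by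
    cases s with
    | zero => rfl
    | succ t =>
      have b1 : t+1-1 = t := by omega
      rw [b1]; ring
  have e8 : s*(s+1+2) = s*s + 3*s := by ring
  have e6 : 2*((s+1)*(s+1)) = 2*(s*s) + 4*s + 2 := by ring
  omega

lemma popularity_add' (r : ℕ) (hr : 1 ≤ r) (v : Fin (4*r)) :
    popularity ⊤ (sig r) v + lab r (↑v) (↑v) = ∑ b ∈ range (4*r), lab r (↑v) b := by
  rw [← Fin.sum_univ_eq_sum_range (fun b => lab r (↑v) b) (4*r)]
  exact popularity_add r (sig r) hr v

lemma pop_inf (r : ℕ) (hr : 1 ≤ r) :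
    popularity ⊤ (sig r) (⟨4*r-1, by omega⟩ : Fin (4*r))
      = 2*r*((4*r-1)*(2*r-1)) + (4*r*r + r) := by
  have h := popularity_add' r hr ⟨4*r-1, by omega⟩
  rw [show ((⟨4*r-1, by omega⟩ : Fin (4*r)) : ℕ) = 4*r-1 from rfl,
    show range (4*r) = range ((4*r-1)+1) from by rw [Nat.sub_add_cancel (by omega)],
    Finset.sum_range_succ] at h
  have hstep : ∀ b ∈ range (4*r-1), lab r (4*r-1) b
      = 2*r*(md r (2*b)) + (if md r (2*b) < 2*r then r+1 else r) := by
    intro b hb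
    simp only [Finset.mem_range] at hb
    rw [lab_inf' r _ b (Or.inl rfl), min_eq_right (by omega : b ≤ 4*r-1)]
  rw [Finset.sum_congr rfl hstep,
    sum_md_double r hr (fun m => 2*r*m + (if m < 2*r then r+1 else r)),
    Finset.sum_add_distrib, ← Finset.mul_sum, sum_range_T r hr, sum_ite_u r hr] at h
  omega

lemma lab_shv (r c d : ℕ) (hr : 1 ≤ r) (hc : c < 4*r-1) (hd1 : 1 ≤ d) (hd2 : d < 4*r-1) :
    lab r c (shv r c d) = 2*r*(md r (2*c+d)) + labval r (md r (2*c+d)) (min d (4*r-1-d)) := by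
  have hb : shv r c d ≠ 4*r-1 := by unfold shv; split_ifs <;> omega
  rw [lab_fin r c _ (by omega) hb]
  have hm : md r (c + shv r c d) = md r (2*c+d) := by
    unfold shv md; split_ifs <;> omega
  have ht : pairt r c (shv r c d) = min d (4*r-1-d) := by
    unfold shv pairt dd; split_ifs <;> omega
  rw [hm, ht]

lemma pop_fin (r : ℕ) (hr : 1 ≤ r) (c : ℕ) (hc : c < 4*r-1) :
    popularity ⊤ (sig r) (⟨c, by omega⟩ : Fin (4*r))
      = 2*r*((4*r-1)*(2*r-1)) + 2*(2*(r*r) - r - 1)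
        + ((if md r (2*c) < 2*r then r+1 else r)
          + ((if md r (2*c+1) < 2*r then r else r+1)
          + (if md r (2*c+(4*r-2)) < 2*r then r else r+1))) := by
  have h := popularity_add' r hr ⟨c, by omega⟩
  rw [show ((⟨c, by omega⟩ : Fin (4*r)) : ℕ) = c from rfl,
    show range (4*r) = range ((4*r-1)+1) from by rw [Nat.sub_add_cancel (by omega)],
    Finset.sum_range_succ] at h
  have hsplit : ∑ b ∈ range (4*r-1), lab r c b
      = (∑ b ∈ (range (4*r-1)).erase c, lab r c b) + lab r c c :=
    (Finset.sum_erase_add _ _ (by simp only [Finset.mem_range]; omega)).symm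
  rw [hsplit] at h
  have hre : ∑ b ∈ (range (4*r-1)).erase c, lab r c b
      = ∑ d ∈ Ico 1 (4*r-1), lab r c (shv r c d) := by
    apply Finset.sum_nbij' (i := fun b => if c < b then b - c else b + (4*r-1) - c)
      (j := shv r c)
    · intro b hb; simp only [Finset.mem_erase, Finset.mem_range, Finset.mem_Ico] at *
      split_ifs <;> omega
    · intro d hd; simp only [Finset.mem_erase, Finset.mem_range, Finset.mem_Ico] at *
      unfold shv; split_ifs <;> omega
    · intro b hb; simp only [Finset.mem_erase, Finset.mem_range] at hb
      unfold shv; split_ifs <;> omega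
    · intro d hd; simp only [Finset.mem_Ico] at hd
      unfold shv; split_ifs <;> omega
    · intro b hb; simp only [Finset.mem_erase, Finset.mem_range] at hb
      congr 1
      unfold shv; split_ifs <;> omega
  rw [hre] at h
  have hterm : ∀ d ∈ Ico 1 (4*r-1), lab r c (shv r c d)
      = 2*r*(md r (2*c+d)) + labval r (md r (2*c+d)) (min d (4*r-1-d)) := by
    intro d hd; simp only [Finset.mem_Ico] at hd
    exact lab_shv r c d hr hc hd.1 hd.2
  rw [Finset.sum_congr rfl hterm, Finset.sum_add_distrib, ← Finset.mul_sum] at h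
  have hA : (∑ d ∈ Ico 1 (4*r-1), md r (2*c+d)) + md r (2*c) = (4*r-1)*(2*r-1) := by
    have h0 := sum_md_shift r c hr hc (fun m => m)
    rw [sum_range_T r hr, Finset.range_eq_Ico,
      Finset.sum_eq_sum_Ico_succ_bot (by omega : 0 < 4*r-1)] at h0
    simp only [Nat.add_zero, Nat.zero_add] at h0
    omega
  have hmul : 2*r*(∑ d ∈ Ico 1 (4*r-1), md r (2*c+d)) + 2*r*(md r (2*c))
      = 2*r*((4*r-1)*(2*r-1)) := by
    rw [← Nat.mul_add, hA]
  have hmid : ∑ d ∈ Ico 2 (4*r-2), labval r (md r (2*c+d)) (min d (4*r-1-d))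
      = 2*(2*(r*r) - r - 1) := by
    have hb1 : ∀ d ∈ Ico 2 (4*r-2), labval r (md r (2*c+d)) (min d (4*r-1-d))
        = bval r (min d (4*r-1-d)) := by
      intro d hd; simp only [Finset.mem_Ico] at hd
      unfold labval bval; rw [if_neg (by omega)]
    rw [Finset.sum_congr rfl hb1,
      ← Finset.sum_Ico_consecutive _ (show 2 ≤ 2*r by omega) (show 2*r ≤ 4*r-2 by omega)]
    have hleft : ∑ d ∈ Ico 2 (2*r), bval r (min d (4*r-1-d)) = ∑ d ∈ Ico 2 (2*r), bval r d :=
      Finset.sum_congr rfl (fun d hd => by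
        simp only [Finset.mem_Ico] at hd; congr 1; omega)
    have hright : ∑ d ∈ Ico (2*r) (4*r-2), bval r (min d (4*r-1-d))
        = ∑ t ∈ Ico 2 (2*r), bval r t := by
      have h1 : ∀ d ∈ Ico (2*r) (4*r-2), bval r (min d (4*r-1-d)) = bval r (4*r-1-d) := by
        intro d hd; simp only [Finset.mem_Ico] at hd; congr 1; omega
      rw [Finset.sum_congr rfl h1]
      apply Finset.sum_nbij' (i := fun d => 4*r-1-d) (j := fun t => 4*r-1-t)
      · intro a ha; simp only [Finset.mem_Ico] at *; omega
      · intro a ha; simp only [Finset.mem_Ico] at *; omega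
      · intro a ha; simp only [Finset.mem_Ico] at ha; omega
      · intro a ha; simp only [Finset.mem_Ico] at ha; omega
      · intro a ha; simp only [Finset.mem_Ico] at ha; congr 1
    rw [hleft, hright]
    have hv := bval_sum r hr
    omega
  have htop : (∑ d ∈ Ico 2 (4*r-1), labval r (md r (2*c+d)) (min d (4*r-1-d)))
      = (∑ d ∈ Ico 2 (4*r-2), labval r (md r (2*c+d)) (min d (4*r-1-d)))
        + labval r (md r (2*c+(4*r-2))) (min (4*r-2) (4*r-1-(4*r-2))) := by
    rw [show 4*r-1 = (4*r-2)+1 by omega]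
    exact Finset.sum_Ico_succ_top (by omega) _
  have he1 : labval r (md r (2*c+1)) (min 1 (4*r-1-1))
      = if md r (2*c+1) < 2*r then r else r+1 := by
    rw [show min 1 (4*r-1-1) = 1 by omega]
    unfold labval; rw [if_pos rfl]
  have he2 : labval r (md r (2*c+(4*r-2))) (min (4*r-2) (4*r-1-(4*r-2)))
      = if md r (2*c+(4*r-2)) < 2*r then r else r+1 := by
    rw [show min (4*r-2) (4*r-1-(4*r-2)) = 1 by omega]
    unfold labval; rw [if_pos rfl]
  have hB : ∑ d ∈ Ico 1 (4*r-1), labval r (md r (2*c+d)) (min d (4*r-1-d))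
      = (if md r (2*c+1) < 2*r then r else r+1)
        + ((if md r (2*c+(4*r-2)) < 2*r then r else r+1) + 2*(2*(r*r) - r - 1)) := by
    rw [Finset.sum_eq_sum_Ico_succ_bot (by omega : 1 < 4*r-1), htop, he1, he2, hmid]
    omega
  have hlabcc : lab r c (4*r-1) = 2*r*(md r (2*c)) + (if md r (2*c) < 2*r then r+1 else r) := by
    rw [lab_symm, lab_inf' r _ c (Or.inl rfl), min_eq_right (by omega : c ≤ 4*r-1)]
  rw [hB, hlabcc] at h
  omega

lemma pop_inf_id (r : ℕ) (hr : 1 ≤ r) :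
    2*(2*r*((4*r-1)*(2*r-1)) + (4*r*r + r)) = (4*r-1)*(2*r*(4*r-1)+1) + 1 := by
  obtain ⟨s, rfl⟩ : ∃ s, r = s+1 := ⟨r-1, by omega⟩
  rw [show 4*(s+1)-1 = 4*s+3 by omega, show 2*(s+1)-1 = 2*s+1 by omega]
  ring

lemma AKident (r : ℕ) (hr : 1 ≤ r) :
    (4*r-1)*(2*r*(4*r-1)+1)
      = 2*(2*r*((4*r-1)*(2*r-1)) + 2*(2*(r*r) - r - 1)) + 6*r + 3 := by
  obtain ⟨s, rfl⟩ : ∃ s, r = s+1 := ⟨r-1, by omega⟩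
  have e : 2*((s+1)*(s+1)) - (s+1) - 1 = 2*(s*s)+3*s := by
    have h1 : (s+1)*(s+1) = s*s + 2*s + 1 := by ring
    omega
  rw [show 4*(s+1)-1 = 4*s+3 by omega, show 2*(s+1)-1 = 2*s+1 by omega, e]
  ring

lemma ind_bounds (r c : ℕ) (hr : 1 ≤ r) (hc : c < 4*r-1) :
    (3*r ≤ (if md r (2*c) < 2*r then r+1 else r)
        + ((if md r (2*c+1) < 2*r then r else r+1)
        + (if md r (2*c+(4*r-2)) < 2*r then r else r+1)))
    ∧ ((if md r (2*c) < 2*r then r+1 else r)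
        + ((if md r (2*c+1) < 2*r then r else r+1)
        + (if md r (2*c+(4*r-2)) < 2*r then r else r+1)) ≤ 3*r+2)
    ∧ (c ≠ 2*r-1 → 3*r+1 ≤ (if md r (2*c) < 2*r then r+1 else r)
        + ((if md r (2*c+1) < 2*r then r else r+1)
        + (if md r (2*c+(4*r-2)) < 2*r then r else r+1))) := by
  unfold md; split_ifs <;> omega

lemma sq_bound (p A k : ℕ) (h1 : A ≤ 2*p + k) (h2 : 2*p ≤ A + k) :
    ((p:ℝ) - A/2)^2 ≤ (k:ℝ)^2/4 := by
  have h1' : (A:ℝ) ≤ 2*p + k := by exact_mod_cast h1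
  have h2' : (2*p:ℝ) ≤ A + k := by push_cast; exact_mod_cast h2
  nlinarith [mul_nonneg (by linarith : (0:ℝ) ≤ (A:ℝ) + k - 2*p)
    (by linarith : (0:ℝ) ≤ 2*(p:ℝ) + k - A)]

lemma accessVar_bound (r : ℕ) (hr : 1 ≤ r) :
    accessVar (⊤ : SimpleGraph (Fin (4*r))) (4*r-1) (sig r) ≤ (r : ℝ) + 2 := by
  unfold accessVar
  rw [card_edgeSet r hr]
  have hAcast : ((((4*r-1)*(2*r*(4*r-1)+1) : ℕ)) : ℝ)
      = ((4*r-1 : ℕ) : ℝ) * (((2*r*(4*r-1) : ℕ) : ℝ) + 1) := by push_cast; ring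
  have key : ∀ v : Fin (4*r),
      ((popularity ⊤ (sig r) v : ℝ) - ((4*r-1 : ℕ) : ℝ) * (((2*r*(4*r-1) : ℕ) : ℝ) + 1) / 2) ^ 2
        ≤ if (v : ℕ) = 2*r-1 then (9:ℝ)/4 else 1/4 := by
    intro v
    rw [← hAcast]
    by_cases hv : (v : ℕ) = 4*r-1
    · -- infinity vertex
      have hveq : v = (⟨4*r-1, by omega⟩ : Fin (4*r)) := by
        apply Fin.ext; exact hv
      rw [hveq, pop_inf r hr, if_neg (by omega)]
      have hid := pop_inf_id r hr
      have := sq_bound (2*r*((4*r-1)*(2*r-1)) + (4*r*r + r)) ((4*r-1)*(2*r*(4*r-1)+1)) 1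
        (by omega) (by omega)
      calc _ ≤ ((1:ℕ):ℝ)^2/4 := this
        _ = 1/4 := by norm_num
    · -- finite vertex
      have hlt : (v : ℕ) < 4*r-1 := by have := v.isLt; omega
      have hveq : v = (⟨(v:ℕ), by omega⟩ : Fin (4*r)) := by apply Fin.ext; rfl
      rw [hveq, pop_fin r hr (v:ℕ) hlt]
      have hKA := AKident r hr
      have hind := ind_bounds r (v:ℕ) hr hlt
      by_cases hc : (v : ℕ) = 2*r-1
      · rw [if_pos hc]
        have := sq_bound
          (2*r*((4*r-1)*(2*r-1)) + 2*(2*(r*r) - r - 1)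
            + ((if md r (2*(v:ℕ)) < 2*r then r+1 else r)
              + ((if md r (2*(v:ℕ)+1) < 2*r then r else r+1)
              + (if md r (2*(v:ℕ)+(4*r-2)) < 2*r then r else r+1))))
          ((4*r-1)*(2*r*(4*r-1)+1)) 3 (by omega) (by omega)
        calc _ ≤ ((3:ℕ):ℝ)^2/4 := this
          _ = 9/4 := by norm_num
      · rw [if_neg hc]
        have hge := hind.2.2 hc
        have := sq_bound
          (2*r*((4*r-1)*(2*r-1)) + 2*(2*(r*r) - r - 1)
            + ((if md r (2*(v:ℕ)) < 2*r then r+1 else r)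
              + ((if md r (2*(v:ℕ)+1) < 2*r then r else r+1)
              + (if md r (2*(v:ℕ)+(4*r-2)) < 2*r then r else r+1))))
          ((4*r-1)*(2*r*(4*r-1)+1)) 1 (by omega) (by omega)
        calc _ ≤ ((1:ℕ):ℝ)^2/4 := this
          _ = 1/4 := by norm_num
  calc ∑ v : Fin (4*r),
      ((popularity ⊤ (sig r) v : ℝ) - ((4*r-1 : ℕ) : ℝ) * (((2*r*(4*r-1) : ℕ) : ℝ) + 1) / 2) ^ 2
      ≤ ∑ v : Fin (4*r), (if (v : ℕ) = 2*r-1 then (9:ℝ)/4 else 1/4) :=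
        Finset.sum_le_sum (fun v _ => key v)
    _ = ∑ v : Fin (4*r), ((1:ℝ)/4 + (if v = (⟨2*r-1, by omega⟩ : Fin (4*r)) then 2 else 0)) := by
        apply Finset.sum_congr rfl
        intro v _
        have hiff : (v : ℕ) = 2*r-1 ↔ v = (⟨2*r-1, by omega⟩ : Fin (4*r)) :=
          ⟨fun h => Fin.ext h, fun h => by rw [h]⟩
        by_cases h : (v : ℕ) = 2*r-1
        · rw [if_pos h, if_pos (hiff.mp h)]; norm_num
        · rw [if_neg h, if_neg (fun hh => h (hiff.mpr hh))]; norm_num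
    _ = (r : ℝ) + 2 := by
        rw [Finset.sum_add_distrib, Finset.sum_const, Finset.sum_ite_eq' univ _ (fun _ => (2:ℝ))]
        simp only [Finset.mem_univ, if_pos, Finset.card_univ, Fintype.card_fin, nsmul_eq_mul]
        push_cast
        ring

end St16

/-- For every positive integer `r`, the complete graph `K_{4r}`
(which is `(4r−1)`-regular) satisfies `MinVar(K_{4r}) ≤ 3r` if `r` is odd and
`MinVar(K_{4r}) ≤ 7r` if `r` is even. -/
theorem statement16 (r : ℕ) (hr : 1 ≤ r) :
    (Odd r → minVar (⊤ : SimpleGraph (Fin (4 * r))) (4 * r - 1) ≤ 3 * r) ∧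
      (Even r → minVar (⊤ : SimpleGraph (Fin (4 * r))) (4 * r - 1) ≤ 7 * r) := by
  have hle : minVar (⊤ : SimpleGraph (Fin (4 * r))) (4 * r - 1) ≤ (r:ℝ) + 2 := by
    unfold minVar
    have hbdd : BddBelow {x : ℝ | ∃ σ, IsEdgeLabeling (⊤ : SimpleGraph (Fin (4 * r))) σ ∧
        accessVar (⊤ : SimpleGraph (Fin (4 * r))) (4 * r - 1) σ = x} := by
      refine ⟨0, ?_⟩
      rintro x ⟨σ, -, rfl⟩
      unfold accessVar
      exact Finset.sum_nonneg (fun v _ => sq_nonneg _)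
    have hmem : accessVar (⊤ : SimpleGraph (Fin (4 * r))) (4 * r - 1) (St16.sig r)
        ∈ {x : ℝ | ∃ σ, IsEdgeLabeling (⊤ : SimpleGraph (Fin (4 * r))) σ ∧
            accessVar (⊤ : SimpleGraph (Fin (4 * r))) (4 * r - 1) σ = x} :=
      ⟨St16.sig r, St16.sig_isEdgeLabeling r hr, rfl⟩
    exact le_trans (csInf_le hbdd hmem) (St16.accessVar_bound r hr)
  have hr' : (1:ℝ) ≤ (r:ℝ) := by exact_mod_cast hr
  constructor
  · intro _
    calc minVar (⊤ : SimpleGraph (Fin (4 * r))) (4 * r - 1) ≤ (r:ℝ) + 2 := hle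
      _ ≤ 3*r := by linarith
  · intro _
    calc minVar (⊤ : SimpleGraph (Fin (4 * r))) (4 * r - 1) ≤ (r:ℝ) + 2 := hle
      _ ≤ 7*r := by linarith
end
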